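/- arXiv:2507.12925 — 2 statements merged into one kernel-verified Lean document; each statement's English description precedes it below -/
import Mathlib

section
/- For every ordered spanning tree T of G and every finite list 𝔼 of edges of G, IM-BFS(T, 𝔼) is an ordered spanning tree of the graph on V whose edge set consists of the tree edges (P(v), v) of T with P(v) ≠ r together with the edges occurring in 𝔼, and it is a BFS-tree of that graph. -/
namespace BFSFormal

variable {V : Type} [Fintype V] [DecidableEq V]

/-- An ordered rooted tree structure on `V ∪ {r}`, where the dummy root `r`
is represented by `none`.  `parent v = none` means the parent of `v` is `r`;
`children w` lists the children of `w` in sibling order. -/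
structure PreTree (V : Type) where
  parent : V → Option V
  children : Option V → List V

/-- One step of the parent function, with `r` (= `none`) absorbing. -/
def parentStep (T : PreTree V) : Option V → Option V
  | none => none
  | some v => T.parent v

/-- `T` is an ordered spanning tree of the directed graph on `V` with edge set `E`
(augmented with the dummy root `r`): iterating the parent function from any node
reaches `r`; every tree edge `(P v, v)` with `P v ≠ r` lies in `E`; and the
children lists give, without repetition, exactly the children of each node. -/
def IsOST (E : Finset (V × V)) (T : PreTree V) : Prop :=
  (∀ v : V, ∃ k : ℕ, (parentStep T)^[k] (some v) = none) ∧
  (∀ v u : V, T.parent v = some u → (u, v) ∈ E) ∧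
  (∀ w : Option V, (T.children w).Nodup) ∧
  (∀ (w : Option V) (v : V), v ∈ T.children w ↔ T.parent v = w)

/-- Replace each node of a list by its list of children (used to pass from one
level of a subtree to the next, keeping the sibling orders). -/
def expand (T : PreTree V) (L : List V) : List V :=
  L.flatMap fun v => T.children (some v)

/-- The breadth-first listing of the nodes of `T`: for each child `c` of the root `r`
in sibling order, all nodes of the subtree rooted at `c` are listed, in level
(breadth-first) order determined by the sibling orders, before the subtree of any
later child of `r`. -/
def bfoList (T : PreTree V) : List V :=
  (T.children none).flatMap fun c =>
    (List.range (Fintype.card V + 1)).flatMap fun k => (expand T)^[k] [c]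

/-- The breadth-first order of a node of `V` on `T` (the root `r` gets `0`,
the nodes of `V` get `1, …, n` in the order of `bfoList`). -/
def bfo (T : PreTree V) (v : V) : ℕ := (bfoList T).idxOf v + 1

/-- Breadth-first order extended to `V ∪ {r}`, with `bfo r = 0`. -/
def bfoOpt (T : PreTree V) : Option V → ℕ
  | none => 0
  | some v => bfo T v

/-- `(u, v)` is a V-BFS edge with respect to `T`:
`bfo u < bfo v`, `P v ≠ r`, and `bfo u < bfo (P v)`. -/
def IsVBFS (T : PreTree V) (e : V × V) : Prop :=
  bfo T e.1 < bfo T e.2 ∧ T.parent e.2 ≠ none ∧ bfo T e.1 < bfoOpt T (T.parent e.2)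

instance (T : PreTree V) (e : V × V) : Decidable (IsVBFS T e) := by
  unfold IsVBFS; infer_instance

/-- `T` is a BFS-tree of the graph with edge set `E` : it is an ordered spanning
tree of that graph and no edge of `E` is a V-BFS edge with respect to `T`. -/
def IsBFSTree (E : Finset (V × V)) (T : PreTree V) : Prop :=
  IsOST E T ∧ ∀ e ∈ E, ¬ IsVBFS T e

/-- `LLSP E` : the number of edges of a longest simple directed path of the graph
with edge set `E`. -/
noncomputable def LLSP (E : Finset (V × V)) : ℕ :=
  sSup {k : ℕ | ∃ p : List V, p.Nodup ∧ p.Chain' (fun a b => (a, b) ∈ E) ∧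
    p.length = k + 1}

/-- `EL` is an enumeration `e₁, …, e_m` of the edge set `E`. -/
def IsEnum (E : Finset (V × V)) (EL : List (V × V)) : Prop :=
  EL.Nodup ∧ ∀ e : V × V, e ∈ EL ↔ e ∈ E

/-- The initial ordered spanning tree of EE-BFS / EB-BFS: every node of `V` is a
child of `r`, in a fixed sibling order. -/
def IsInitTree (T : PreTree V) : Prop :=
  (∀ v : V, T.parent v = none) ∧ (T.children none).Nodup ∧
  (∀ v : V, v ∈ T.children none) ∧ (∀ v : V, T.children (some v) = [])

/-- Restructuring step of EE-BFS: make `v` the rightmost child of `u` (the parent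
of `v` becomes `u` and `v` is placed last in the sibling order of the children of
`u`), all other parents and sibling orders being unchanged. -/
def restructure (T : PreTree V) (u v : V) : PreTree V where
  parent w := if w = v then some u else T.parent w
  children w :=
    if w = some u then (T.children (some u)).erase v ++ [v]
    else (T.children w).erase v

/-- Scanning a list of edges, EE-BFS style: each scanned edge that is a V-BFS edge
with respect to the current tree triggers a restructuring. -/
def EEscan (EL : List (V × V)) (T : PreTree V) : PreTree V :=
  EL.foldl (fun Tc e => if IsVBFS Tc e then restructure Tc e.1 e.2 else Tc) T

/-- One pass of EE-BFS over the fixed enumeration `EL` of `E`. -/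
def EEstep (EL : List (V × V)) (T : PreTree V) : PreTree V := EEscan EL T

/- ------------------  IM-BFS  ------------------ -/

/-- State of the deterministic BFS of IM-BFS: the FIFO queue, the set of nodes
already enqueued (adopted), and the adoption records `(new parent, child)` in
adoption order. -/
structure BFSState (V : Type) where
  queue : List V
  marked : Finset V
  adopts : List (Option V × V)

/-- Enqueue, with prospective parent `p`, the candidates in order; a node already
enqueued before is ignored (it was adopted the first time it was enqueued). -/
def enq (p : Option V) (cands : List V) (s : BFSState V) : BFSState V :=
  cands.foldl
    (fun s c =>
      if c ∈ s.marked then s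
      else ⟨s.queue ++ [c], insert c s.marked, s.adopts ++ [(p, c)]⟩) s

/-- The main loop of IM-BFS (fuel-based).  When the queue is nonempty, the first
node `u` is dequeued and visited: the children of `u` in `T` (in sibling order)
and then the targets of the edges of `EL` with source `u` (in list order) are
enqueued.  When the queue is empty, the earliest (in sibling order) not yet
enqueued child of `r` in `T` is enqueued with parent `r`; if all nodes have been
enqueued the adoption records are returned. -/
noncomputable def imBFSAux (T : PreTree V) (EL : List (V × V)) :
    ℕ → BFSState V → List (Option V × V)
  | 0, s => s.adopts
  | fuel + 1, s =>
    match s.queue with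
    | u :: rest =>
        let cands := T.children (some u) ++
          (EL.filter fun e => decide (e.1 = u)).map Prod.snd
        imBFSAux T EL fuel (enq (some u) cands ⟨rest, s.marked, s.adopts⟩)
    | [] =>
        match (T.children none).find? (fun c => decide (c ∉ s.marked)) with
        | some c => imBFSAux T EL fuel (enq none [c] s)
        | none =>
            match (Finset.univ : Finset V).toList.find?
                (fun v => decide (v ∉ s.marked)) with
            | some v => imBFSAux T EL fuel (enq none [v] s)
            | none => s.adopts

/-- `imBFS T EL` : the ordered spanning tree produced by the deterministic
breadth-first search, started at `r`, of the graph whose edges are the tree edges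
of `T` together with the edges occurring in the list `EL` (Stipulation 1):
each node's new parent is the node during whose processing it was first enqueued,
and the children of each node are ordered by adoption time. -/
noncomputable def imBFS (T : PreTree V) (EL : List (V × V)) : PreTree V :=
  let ad := imBFSAux T EL (2 * Fintype.card V + 1) ⟨[], ∅, []⟩
  { parent := fun v =>
      match ad.find? (fun pc => decide (pc.2 = v)) with
      | some pc => pc.1
      | none => none
    children := fun w => (ad.filter fun pc => decide (pc.1 = w)).map Prod.snd }

/-- The set of tree edges `(P v, v)` of `T` with `P v ≠ r`. -/
def treeEdges (T : PreTree V) : Finset (V × V) :=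
  Finset.univ.filter fun e : V × V => T.parent e.2 = some e.1

/- ------------------  EB-BFS  ------------------ -/

/-- One pass of EB-BFS (also the map `RE(𝔼₁, …, 𝔼_k)`): replace the current tree
`T` by `IM-BFS(T, 𝔼)` successively for each batch `𝔼`. -/
noncomputable def EBstep (batches : List (List (V × V))) (T : PreTree V) : PreTree V :=
  batches.foldl imBFS T

/-- The pass of EB-BFS over `batches` starting from `T` is one during which every
batch replacement leaves the edge set of the tree unchanged. -/
def CleanPass (batches : List (List (V × V))) (T : PreTree V) : Prop :=
  ∀ j < batches.length,
    (imBFS ((batches.take j).foldl imBFS T) (batches.getD j [])).parent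
      = ((batches.take j).foldl imBFS T).parent

/- ------------------  the sublist S(T, 𝔼)  ------------------ -/

/-- `S T EL` : if `EL` contains no V-BFS edge w.r.t. `T`, the empty list; otherwise,
letting `e₁ = (u₁, v₁)` be the earliest V-BFS edge of `EL` whose tail has minimal
breadth-first order among tails of V-BFS edges of `EL`, the sublist of `EL` (in the
same order) of the edges `(u, v)` at the position of `e₁` or later with
`u ≠ P(v)`, `bfo u ≥ bfo u₁` and `bfo v ≥ bfo u₁`. -/
def S (T : PreTree V) (EL : List (V × V)) : List (V × V) :=
  let vb := EL.filter fun e => decide (IsVBFS T e)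
  match (vb.map fun e => bfo T e.1).min? with
  | none => []
  | some b =>
      (EL.dropWhile fun e => !(decide (IsVBFS T e) && decide (bfo T e.1 = b))).filter
        fun e => decide (T.parent e.2 ≠ some e.1) && decide (b ≤ bfo T e.1)
          && decide (b ≤ bfo T e.2)

/-- The map sending `T` to `T_{k+1}` where `T₁ = T`, `S_j = S(T_j, E_j)` and
`T_{j+1} = IM-BFS(T_j, S_j)` (i.e. `RE(S₁, …, S_k)` with the `S`-lists recomputed
from the successively current trees). -/
noncomputable def reSstep (batches : List (List (V × V))) (T : PreTree V) : PreTree V :=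
  batches.foldl (fun Tc EL => imBFS Tc (S Tc EL)) T

/-- The list `[S₁, …, S_k]` of the sublists computed along the run
`T₁ = T`, `S_j = S(T_j, E_j)`, `T_{j+1} = IM-BFS(T_j, S_j)`. -/
noncomputable def runS (batches : List (List (V × V))) (T : PreTree V) : List (List (V × V)) :=
  (List.range batches.length).map fun j =>
    S (reSstep (batches.take j) T) (batches.getD j [])

/- ------------------  depth and depth'  ------------------ -/

/-- The depth of `v` in `T`: the number of tree edges on the path from `r` to `v`. -/
noncomputable def depth (T : PreTree V) (v : V) : ℕ :=
  sInf {k : ℕ | (parentStep T)^[k] (some v) = none}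

/-- The topmost proper ancestor of `v` (the child of `r` whose subtree contains `v`). -/
noncomputable def topAnc (T : PreTree V) (v : V) : Option V :=
  (parentStep T)^[depth T v - 1] (some v)

/-- `d(T_c)` : the maximum depth in `T` of a node of the subtree of `T` rooted at
the child `c` of `r`. -/
noncomputable def subtreeMaxDepth (T : PreTree V) (c : V) : ℕ :=
  Finset.univ.sup fun u : V => if topAnc T u = some c then depth T u else 0

/-- `depth′(v, T) = Σ_{1 ≤ l ≤ j−1} d(T_l) + depth(v, T)` where `v` belongs to the
subtree `T_j` of the `j`-th child of `r` in sibling order. -/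
noncomputable def depth' (T : PreTree V) (v : V) : ℕ :=
  match topAnc T v with
  | none => depth T v
  | some c =>
      (((T.children none).takeWhile fun x => decide (x ≠ c)).map
        (subtreeMaxDepth T)).sum + depth T v

/- ------------------  node removal (statements 13, 14)  ------------------ -/

/-- The edge set of the induced subgraph `G − u`, on the subtype `{v // v ≠ u}`. -/
def Esub (E : Finset (V × V)) (u : V) :
    Finset ({v : V // v ≠ u} × {v : V // v ≠ u}) :=
  Finset.univ.filter fun e => ((e.1 : V), (e.2 : V)) ∈ E

/-- Extend an ordered spanning tree `T'` of `G − u` to one of `G` by adding `u`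
as the rightmost child of `r`. -/
def extendRight (u : V) (T' : PreTree {v : V // v ≠ u}) : PreTree V where
  parent v := if h : v = u then none else (T'.parent ⟨v, h⟩).map Subtype.val
  children w :=
    match w with
    | none => (T'.children none).map Subtype.val ++ [u]
    | some x =>
        if hx : x = u then []
        else (T'.children (some ⟨x, hx⟩)).map Subtype.val

/-- Extend an ordered spanning tree `T'` of `G − u` to one of `G` by adding `u`
as the leftmost child of `r`. -/
def extendLeft (u : V) (T' : PreTree {v : V // v ≠ u}) : PreTree V where
  parent v := if h : v = u then none else (T'.parent ⟨v, h⟩).map Subtype.val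
  children w :=
    match w with
    | none => u :: (T'.children none).map Subtype.val
    | some x =>
        if hx : x = u then []
        else (T'.children (some ⟨x, hx⟩)).map Subtype.val

/- ------------------  auxiliary material for Statement 4  ------------------ -/

section Stmt4Aux

set_option linter.unusedSectionVars false

variable {V : Type} [Fintype V] [DecidableEq V]

/-- The list of candidates enqueued while processing `u`. -/
def cands (T : PreTree V) (EL : List (V × V)) (u : V) : List V :=
  T.children (some u) ++ (EL.filter fun e => decide (e.1 = u)).map Prod.snd

/-- Children lists extracted from a record list. -/
def chA (A : List (Option V × V)) (w : Option V) : List V :=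
  (A.filter fun pc => decide (pc.1 = w)).map Prod.snd

lemma chA_append (X Y : List (Option V × V)) (w : Option V) :
    chA (X ++ Y) w = chA X w ++ chA Y w := by
  simp [chA]

lemma mem_chA {A : List (Option V × V)} {w : Option V} {v : V} :
    v ∈ chA A w ↔ ∃ pc ∈ A, pc.1 = w ∧ pc.2 = v := by
  simp only [chA, List.mem_map, List.mem_filter, decide_eq_true_eq]
  constructor
  · rintro ⟨pc, ⟨h1, h2⟩, h3⟩; exact ⟨pc, h1, h2, h3⟩
  · rintro ⟨pc, h1, h2, h3⟩; exact ⟨pc, ⟨h1, h2⟩, h3⟩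

/- ------------------  generic level machinery  ------------------ -/

/-- `ex ch` is `expand` for an abstract children function. -/
def ex (ch : V → List V) (Q : List V) : List V := Q.flatMap ch

/-- The concatenation of the levels `Q, ex Q, ex² Q, …` up to level `N - 1`. -/
def Wl (ch : V → List V) (N : ℕ) (Q : List V) : List V :=
  (List.range N).flatMap fun k => (ex ch)^[k] Q

lemma ex_nil (ch : V → List V) : ex ch [] = [] := rfl

lemma ex_cons (ch : V → List V) (a : V) (Q : List V) :
    ex ch (a :: Q) = ch a ++ ex ch Q := rfl

lemma ex_append (ch : V → List V) (A B : List V) :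
    ex ch (A ++ B) = ex ch A ++ ex ch B := by
  simp [ex]

lemma iterate_ex_nil (ch : V → List V) (k : ℕ) : (ex ch)^[k] [] = [] := by
  induction k with
  | zero => rfl
  | succ k ih => rw [Function.iterate_succ_apply, ex_nil, ih]

lemma Wl_nil (ch : V → List V) (N : ℕ) : Wl ch N [] = [] := by
  simp [Wl, iterate_ex_nil]

lemma Wl_succ (ch : V → List V) (N : ℕ) (Q : List V) :
    Wl ch (N + 1) Q = Q ++ Wl ch N (ex ch Q) := by
  simp only [Wl, List.range_succ_eq_map, List.flatMap_cons, Function.iterate_zero_apply,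
    List.flatMap_map, Function.comp, Function.iterate_succ_apply]

lemma Wl_last (ch : V → List V) (N : ℕ) (Q : List V) :
    Wl ch (N + 1) Q = Wl ch N Q ++ (ex ch)^[N] Q := by
  simp [Wl, List.range_succ]

/-- The key shift identity for levels. -/
lemma Wl_shift (ch : V → List V) :
    ∀ (N : ℕ) (A B : List V), (ex ch)^[N] A = [] →
      Wl ch (N + 1) (A ++ B) = A ++ Wl ch (N + 1) (B ++ ex ch A) := by
  intro N
  induction N with
  | zero =>
      intro A B hA
      simp only [Function.iterate_zero_apply] at hA
      subst hA
      simp [Wl_succ, ex_nil, Wl]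
  | succ N ih =>
      intro A B hA
      have hA' : (ex ch)^[N] (ex ch A) = [] := by
        rw [← Function.iterate_succ_apply]; exact hA
      rw [Wl_succ ch (N + 1) (A ++ B), Wl_succ ch (N + 1) (B ++ ex ch A),
        ex_append ch A B, ex_append ch B (ex ch A),
        ih (ex ch A) (ex ch B) hA']
      simp [List.append_assoc]

/-- Vanishing of levels: if `ch` strictly increases a rank bounded by `n`,
then all levels from `n` on are empty. -/
lemma iterate_ex_eq_nil (ch : V → List V) (ρ : V → ℕ) (n : ℕ)
    (h : ∀ u v, v ∈ ch u → ρ u < ρ v ∧ ρ v < n) :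
    ∀ (k : ℕ) (Q : List V), 1 ≤ k → n ≤ k → (ex ch)^[k] Q = [] := by
  have key : ∀ (k : ℕ) (Q : List V) (w : V), w ∈ (ex ch)^[k + 1] Q → k + 1 ≤ ρ w ∧ ρ w < n := by
    intro k
    induction k with
    | zero =>
        intro Q w hw
        simp only [Function.iterate_succ_apply, Function.iterate_zero_apply, ex] at hw
        obtain ⟨u, _, hw⟩ := List.mem_flatMap.1 hw
        have := h u w hw
        omega
    | succ k ih =>
        intro Q w hw
        rw [Function.iterate_succ_apply'] at hw
        simp only [ex] at hw
        obtain ⟨u, hu, hw⟩ := List.mem_flatMap.1 hw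
        have h1 := ih Q u hu
        have h2 := h u w hw
        omega
  intro k Q h1 h2
  rw [List.eq_nil_iff_forall_not_mem]
  intro w hw
  obtain ⟨k', rfl⟩ : ∃ k', k = k' + 1 := ⟨k - 1, by omega⟩
  have := key k' Q w hw
  omega

/- ------------------  the `enq` fold  ------------------ -/

/-- The sublist of fresh (not yet marked) candidates, removing duplicates. -/
def fresh (m : Finset V) : List V → List V
  | [] => []
  | c :: cs => if c ∈ m then fresh m cs else c :: fresh (insert c m) cs

lemma mem_fresh : ∀ (cs : List V) (m : Finset V) (x : V),
    x ∈ fresh m cs ↔ x ∈ cs ∧ x ∉ m := by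
  intro cs
  induction cs with
  | nil => simp [fresh]
  | cons c cs ih =>
      intro m x
      by_cases hc : c ∈ m
      · simp only [fresh, if_pos hc, ih]
        constructor
        · rintro ⟨h1, h2⟩; exact ⟨List.mem_cons_of_mem _ h1, h2⟩
        · rintro ⟨h1, h2⟩
          rcases List.mem_cons.1 h1 with rfl | h1
          · exact absurd hc h2
          · exact ⟨h1, h2⟩
      · simp only [fresh, if_neg hc, List.mem_cons, ih, Finset.mem_insert]
        constructor
        · rintro (rfl | ⟨h1, h2⟩)
          · exact ⟨Or.inl rfl, hc⟩
          · exact ⟨Or.inr h1, fun hx => h2 (Or.inr hx)⟩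
        · rintro ⟨rfl | h1, h2⟩
          · exact Or.inl rfl
          · by_cases hxc : x = c
            · exact Or.inl hxc
            · refine Or.inr ⟨h1, fun hx => ?_⟩
              rcases hx with h | h
              · exact hxc h
              · exact h2 h

lemma fresh_nodup : ∀ (cs : List V) (m : Finset V), (fresh m cs).Nodup := by
  intro cs
  induction cs with
  | nil => intro m; simp [fresh]
  | cons c cs ih =>
      intro m
      by_cases hc : c ∈ m
      · simpa [fresh, if_pos hc] using ih m
      · simp only [fresh, if_neg hc]
        refine List.nodup_cons.2 ⟨fun hx => ?_, ih _⟩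
        exact ((mem_fresh _ _ _).1 hx).2 (Finset.mem_insert_self _ _)

lemma enq_eq (p : Option V) : ∀ (cs : List V) (s : BFSState V),
    enq p cs s = ⟨s.queue ++ fresh s.marked cs, s.marked ∪ (fresh s.marked cs).toFinset,
      s.adopts ++ (fresh s.marked cs).map fun c => (p, c)⟩ := by
  intro cs
  induction cs with
  | nil => intro s; simp [enq, fresh]
  | cons c cs ih =>
      intro s
      by_cases hc : c ∈ s.marked
      · have : enq p (c :: cs) s = enq p cs s := by
          simp [enq, List.foldl_cons, if_pos hc]
        rw [this, ih, fresh, if_pos hc]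
      · have : enq p (c :: cs) s =
            enq p cs ⟨s.queue ++ [c], insert c s.marked, s.adopts ++ [(p, c)]⟩ := by
          simp [enq, List.foldl_cons, if_neg hc]
        rw [this, ih, fresh, if_neg hc]
        simp only [BFSState.mk.injEq]
        refine ⟨by simp, ?_, by simp⟩
        simp [Finset.insert_union, List.toFinset_cons, Finset.union_insert]

/- ------------------  invariants of the IM-BFS loop  ------------------ -/

/-- Invariant of a reachable state of the IM-BFS loop. -/
structure Inv (T : PreTree V) (EL : List (V × V)) (s : BFSState V) (done : List V) : Prop where
  h1 : done ++ s.queue = s.adopts.map Prod.snd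
  h2 : (s.adopts.map Prod.snd).Nodup
  h3 : ∀ v : V, v ∈ s.marked ↔ v ∈ s.adopts.map Prod.snd
  h4 : ∀ pv ∈ s.adopts, ∀ p' : V, pv.1 = some p' → p' ∈ done
  h5 : ∀ u ∈ done, ∀ v ∈ cands T EL u, v ∈ s.marked
  h6 : ∀ pv ∈ s.adopts, ∀ p' : V, pv.1 = some p' → pv.2 ∈ cands T EL p'
  h7 : ∀ pv ∈ s.adopts, ∀ p' : V, pv.1 = some p' →
      (s.adopts.map Prod.snd).idxOf p' < (s.adopts.map Prod.snd).idxOf pv.2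
  h8 : ∀ u ∈ done, ∀ pv ∈ s.adopts, pv.2 ∈ cands T EL u → ∀ q' : V, pv.1 = some q' →
      (s.adopts.map Prod.snd).idxOf q' ≤ (s.adopts.map Prod.snd).idxOf u

/-- The per-subtree breadth-first phases of the not yet marked root children. -/
def phases (A : List (Option V × V)) (m : Finset V) : List V :=
  ((chA A none).filter fun c => decide (c ∉ m)).flatMap fun c =>
    Wl (fun v => chA A (some v)) (Fintype.card V + 1) [c]

/-- Conclusions of the IM-BFS loop run from a reachable state. -/
structure Concl (T : PreTree V) (EL : List (V × V)) (s : BFSState V) (done : List V)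
    (A : List (Option V × V)) : Prop where
  pre : s.adopts <+: A
  nodup : (A.map Prod.snd).Nodup
  total : ∀ v : V, v ∈ A.map Prod.snd
  edge : ∀ pv ∈ A, ∀ p' : V, pv.1 = some p' → pv.2 ∈ cands T EL p'
  hidx : ∀ pv ∈ A, ∀ p' : V, pv.1 = some p' →
      (A.map Prod.snd).idxOf p' < (A.map Prod.snd).idxOf pv.2
  core : ∀ u : V, ∀ pv ∈ A, pv.2 ∈ cands T EL u → ∀ q' : V, pv.1 = some q' →
      (A.map Prod.snd).idxOf q' ≤ (A.map Prod.snd).idxOf u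
  struct : A.map Prod.snd = s.adopts.map Prod.snd
      ++ Wl (fun v => chA A (some v)) (Fintype.card V + 1)
          (ex (fun v => chA A (some v)) s.queue)
      ++ phases A s.marked
  nofut : ∀ pv ∈ A.drop s.adopts.length, ∀ p' : V, pv.1 = some p' → p' ∉ done

theorem mainGL {T : PreTree V} {EL : List (V × V)} (E : Finset (V × V)) (hT : IsOST E T)
    (hV : 1 ≤ Fintype.card V) :
    ∀ (fuel : ℕ) (s : BFSState V) (done : List V), Inv T EL s done →
      s.queue.length + 2 * (Finset.univ \ s.marked).card + 1 ≤ fuel →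
      Concl T EL s done (imBFSAux T EL fuel s) := by
  intro fuel
  induction fuel with
  | zero => intro s done _ hf; omega
  | succ fuel ih =>
    intro s done hI hf
    obtain ⟨q, m, ad⟩ := s
    obtain ⟨h1, h2, h3, h4, h5, h6, h7, h8⟩ := hI
    simp only at h1 h2 h3 h4 h5 h6 h7 h8 hf ⊢
    rcases q with _ | ⟨u, rest⟩
    · -- empty queue
      have hdoneL : done = ad.map Prod.snd := by simpa using h1
      rcases hfind : (T.children none).find? (fun c => decide (c ∉ m)) with _ | c
      · rcases hfind2 : (Finset.univ : Finset V).toList.find?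
            (fun v => decide (v ∉ m)) with _ | v
        · -- terminal: everything marked, the run returns its adoption records
          have hstep : imBFSAux T EL (fuel + 1) ⟨[], m, ad⟩ = ad := by
            simp only [imBFSAux]
            rw [hfind, hfind2]
          have hallm : ∀ x : V, x ∈ m := by
            intro x
            by_contra hx
            have := List.find?_eq_none.1 hfind2 x (by simp [Finset.mem_toList])
            simp [hx] at this
          have htotal : ∀ v : V, v ∈ ad.map Prod.snd := fun v => (h3 v).1 (hallm v)
          rw [hstep]
          refine ⟨List.prefix_refl _, h2, htotal, h6, h7, ?_, ?_, ?_⟩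
          · intro u' pv hpv hcand q' hq'
            have hu'd : u' ∈ done := by rw [hdoneL]; exact htotal u'
            exact h8 u' hu'd pv hpv hcand q' hq'
          · have hph : phases ad m = [] := by
              unfold phases
              have hfil : ((chA ad none).filter fun c => decide (c ∉ m)) = [] := by
                rw [List.filter_eq_nil_iff]
                intro a _ hdec
                rw [decide_eq_true_eq] at hdec
                exact hdec (hallm a)
              rw [hfil]
              rfl
            show ad.map Prod.snd = ad.map Prod.snd ++ _ ++ phases ad m
            rw [hph, ex_nil, Wl_nil]
            simp
          · intro pv hpv
            rw [List.drop_length] at hpv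
            exact absurd hpv (List.not_mem_nil)
        · -- impossible: some node unmarked although all root children are marked
          exfalso
          have hall : ∀ x ∈ T.children none, x ∈ m := by
            intro x hx
            have := List.find?_eq_none.1 hfind x hx
            simpa using this
          have hvm : v ∉ m := by simpa using List.find?_some hfind2
          have hclimb : ∀ (k : ℕ) (x : V), (parentStep T)^[k] (some x) = none → x ∈ m := by
            intro k
            induction k with
            | zero => intro x hx; simp at hx
            | succ k ihk =>
              intro x hx
              rw [Function.iterate_succ_apply] at hx
              have hps : parentStep T (some x) = T.parent x := rfl
              rw [hps] at hx
              rcases hp : T.parent x with _ | w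
              · exact hall x ((hT.2.2.2 none x).2 hp)
              · rw [hp] at hx
                have hwm : w ∈ m := ihk w hx
                have hwdone : w ∈ done := by rw [hdoneL]; exact (h3 w).1 hwm
                exact h5 w hwdone x
                  (List.mem_append.2 (Or.inl ((hT.2.2.2 (some w) x).2 hp)))
          obtain ⟨k, hk⟩ := hT.1 v
          exact hvm (hclimb k v hk)
      · -- a fresh root child c is enqueued with parent r
        have hc1 : c ∈ T.children none := List.mem_of_find?_eq_some hfind
        have hc2 : c ∉ m := by simpa using List.find?_some hfind
        have hstep : imBFSAux T EL (fuel + 1) ⟨[], m, ad⟩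
            = imBFSAux T EL fuel (enq none [c] ⟨[], m, ad⟩) := by
          simp only [imBFSAux]
          rw [hfind]
        have hfr : fresh m [c] = [c] := by simp [fresh, hc2]
        set ad₁ : List (Option V × V) := ad ++ [((none : Option V), c)] with had₁
        have henq : enq none [c] ⟨[], m, ad⟩ = ⟨[c], m ∪ [c].toFinset, ad₁⟩ := by
          rw [enq_eq]
          simp [hfr, had₁]
        have hmm1 : ad₁.map Prod.snd = ad.map Prod.snd ++ [c] := by simp [had₁]
        have hcnotL : c ∉ ad.map Prod.snd := fun h => hc2 ((h3 c).2 h)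
        have hId : Inv T EL ⟨[c], m ∪ [c].toFinset, ad₁⟩ done := by
          constructor
          · show done ++ [c] = ad₁.map Prod.snd
            rw [hmm1, ← hdoneL]
          · show (ad₁.map Prod.snd).Nodup
            rw [hmm1]
            refine h2.append (List.nodup_singleton c) ?_
            intro a ha hac
            rw [List.mem_singleton] at hac
            subst hac
            exact hcnotL ha
          · intro v
            show v ∈ m ∪ [c].toFinset ↔ v ∈ ad₁.map Prod.snd
            rw [hmm1]
            simp [h3 v, or_comm]
          · intro pv hpv p' hp'
            rcases List.mem_append.1 hpv with hin | hin
            · exact h4 pv hin p' hp'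
            · rw [List.mem_singleton] at hin
              subst hin
              exact absurd hp' (by simp)
          · intro u' hu' v hv
            exact Finset.mem_union_left _ (h5 u' hu' v hv)
          · intro pv hpv p' hp'
            rcases List.mem_append.1 hpv with hin | hin
            · exact h6 pv hin p' hp'
            · rw [List.mem_singleton] at hin
              subst hin
              exact absurd hp' (by simp)
          · intro pv hpv p' hp'
            show (ad₁.map Prod.snd).idxOf p' < (ad₁.map Prod.snd).idxOf pv.2
            rw [hmm1]
            rcases List.mem_append.1 hpv with hin | hin
            · have hpL : p' ∈ ad.map Prod.snd := by
                rw [← hdoneL]; exact h4 pv hin p' hp'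
              have hvL : pv.2 ∈ ad.map Prod.snd := List.mem_map_of_mem (f := Prod.snd) hin
              rw [List.idxOf_append_of_mem hpL, List.idxOf_append_of_mem hvL]
              exact h7 pv hin p' hp'
            · rw [List.mem_singleton] at hin
              subst hin
              exact absurd hp' (by simp)
          · intro u' hu' pv hpv hcand q' hq'
            show (ad₁.map Prod.snd).idxOf q' ≤ (ad₁.map Prod.snd).idxOf u'
            rw [hmm1]
            rcases List.mem_append.1 hpv with hin | hin
            · have hqL : q' ∈ ad.map Prod.snd := by
                rw [← hdoneL]; exact h4 pv hin q' hq'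
              have hu'L : u' ∈ ad.map Prod.snd := by rw [← hdoneL]; exact hu'
              rw [List.idxOf_append_of_mem hqL, List.idxOf_append_of_mem hu'L]
              exact h8 u' hu' pv hin hcand q' hq'
            · rw [List.mem_singleton] at hin
              subst hin
              exact absurd hq' (by simp)
        have hcm : c ∈ Finset.univ \ m := Finset.mem_sdiff.2 ⟨Finset.mem_univ _, hc2⟩
        have hcard : (Finset.univ \ (m ∪ [c].toFinset)).card = (Finset.univ \ m).card - 1 := by
          have hid : Finset.univ \ (m ∪ [c].toFinset) = (Finset.univ \ m) \ {c} := by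
            ext x
            simp only [Finset.mem_sdiff, Finset.mem_union, Finset.mem_univ, true_and,
              List.mem_toFinset, List.mem_singleton, Finset.mem_singleton]
            tauto
          rw [hid, Finset.card_sdiff_of_subset (Finset.singleton_subset_iff.2 hcm),
            Finset.card_singleton]
        have hUpos : 1 ≤ (Finset.univ \ m).card := Finset.card_pos.2 ⟨c, hcm⟩
        have hf' : ([c] : List V).length + 2 * (Finset.univ \ (m ∪ [c].toFinset)).card + 1
            ≤ fuel := by
          rw [hcard]
          simp only [List.length_nil, List.length_cons] at hf ⊢
          omega
        have C₁ := ih ⟨[c], m ∪ [c].toFinset, ad₁⟩ done hId hf'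
        rw [hstep, henq]
        set A := imBFSAux T EL fuel ⟨[c], m ∪ [c].toFinset, ad₁⟩ with hA
        obtain ⟨t, ht⟩ := C₁.pre
        have hdrop₁ : A.drop ad₁.length = t := by rw [← ht]; exact List.drop_left
        have hAeq : A = ad ++ ([((none : Option V), c)] ++ t) := by
          rw [← ht, had₁, List.append_assoc]
        have hrank : ∀ a b : V, b ∈ chA A (some a) →
            (A.map Prod.snd).idxOf a < (A.map Prod.snd).idxOf b ∧
            (A.map Prod.snd).idxOf b < Fintype.card V := by
          intro a b hb
          obtain ⟨pc, hpc, hfst, hsnd⟩ := mem_chA.1 hb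
          constructor
          · have := C₁.hidx pc hpc a hfst
            rwa [hsnd] at this
          · have hbL : b ∈ A.map Prod.snd := hsnd ▸ List.mem_map_of_mem (f := Prod.snd) hpc
            exact lt_of_lt_of_le (List.idxOf_lt_length_iff.2 hbL) (C₁.nodup.length_le_card)
        have hvan := iterate_ex_eq_nil (fun v => chA A (some v))
          (fun x => (A.map Prod.snd).idxOf x) (Fintype.card V) hrank
        have hchAnone : chA A none
            = chA ad none ++ (chA [((none : Option V), c)] none ++ chA t none) := by
          rw [hAeq, chA_append, chA_append]
        have e2 : chA [((none : Option V), c)] none = [c] := by simp [chA]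
        have htnotm : ∀ x ∈ chA t none, x ∉ m ∧ x ≠ c := by
          intro x hx
          obtain ⟨pc, hpc, _, hsnd⟩ := mem_chA.1 hx
          have hxt : x ∈ t.map Prod.snd := hsnd ▸ List.mem_map_of_mem (f := Prod.snd) hpc
          have hAL : A.map Prod.snd = (ad.map Prod.snd ++ [c]) ++ t.map Prod.snd := by
            rw [← ht]
            simp [had₁]
          have hnd := C₁.nodup
          rw [hAL] at hnd
          have hdisj := List.disjoint_of_nodup_append hnd
          constructor
          · intro hxm
            exact hdisj (List.mem_append.2 (Or.inl ((h3 x).1 hxm))) hxt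
          · intro hxc
            subst hxc
            exact hdisj (List.mem_append.2 (Or.inr (List.mem_singleton_self _))) hxt
        have e1 : (chA ad none).filter (fun x => decide (x ∉ m)) = [] := by
          rw [List.filter_eq_nil_iff]
          intro a ha hdec
          rw [decide_eq_true_eq] at hdec
          obtain ⟨pc, hpc, _, hsnd⟩ := mem_chA.1 ha
          exact hdec ((h3 a).2 (hsnd ▸ List.mem_map_of_mem (f := Prod.snd) hpc))
        have f1 : (chA ad none).filter (fun x => decide (x ∉ m ∪ [c].toFinset)) = [] := by
          rw [List.filter_eq_nil_iff]
          intro a ha hdec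
          rw [decide_eq_true_eq] at hdec
          obtain ⟨pc, hpc, _, hsnd⟩ := mem_chA.1 ha
          exact hdec (Finset.mem_union_left _
            ((h3 a).2 (hsnd ▸ List.mem_map_of_mem (f := Prod.snd) hpc)))
        have f2 : ([c] : List V).filter (fun x => decide (x ∉ m ∪ [c].toFinset)) = [] := by
          rw [List.filter_eq_nil_iff]
          intro a ha hdec
          rw [List.mem_singleton] at ha
          subst ha
          rw [decide_eq_true_eq] at hdec
          exact hdec (Finset.mem_union_right _ (by simp))
        have f2' : ([c] : List V).filter (fun x => decide (x ∉ m)) = [c] := by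
          rw [List.filter_eq_self]
          intro a ha
          rw [List.mem_singleton] at ha
          subst ha
          exact decide_eq_true hc2
        have f3 : (chA t none).filter (fun x => decide (x ∉ m)) = chA t none := by
          rw [List.filter_eq_self]
          intro a ha
          rw [decide_eq_true_eq]
          exact (htnotm a ha).1
        have f3' : (chA t none).filter (fun x => decide (x ∉ m ∪ [c].toFinset))
            = chA t none := by
          rw [List.filter_eq_self]
          intro a ha
          rw [decide_eq_true_eq]
          simp only [Finset.mem_union, List.mem_toFinset, List.mem_singleton]
          rintro (h | h)
          · exact (htnotm a ha).1 h
          · exact (htnotm a ha).2 (by simpa using h)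
        have hfilters : (chA A none).filter (fun x => decide (x ∉ m))
            = c :: (chA A none).filter (fun x => decide (x ∉ m ∪ [c].toFinset)) := by
          rw [hchAnone, e2, List.filter_append, List.filter_append,
            List.filter_append, List.filter_append, e1, f1, f2, f2', f3, f3']
          simp
        have hph : phases A m = Wl (fun v => chA A (some v)) (Fintype.card V + 1) [c]
            ++ phases A (m ∪ [c].toFinset) := by
          unfold phases
          rw [hfilters, List.flatMap_cons]
        have hstruct : A.map Prod.snd = ad.map Prod.snd
            ++ Wl (fun v => chA A (some v)) (Fintype.card V + 1)
                (ex (fun v => chA A (some v)) ([] : List V))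
            ++ phases A m := by
          rw [ex_nil, Wl_nil, List.append_nil, hph, Wl_succ]
          have hlast : Wl (fun v => chA A (some v)) (Fintype.card V + 1)
              (ex (fun v => chA A (some v)) [c])
              = Wl (fun v => chA A (some v)) (Fintype.card V)
                (ex (fun v => chA A (some v)) [c]) := by
            rw [Wl_last, hvan (Fintype.card V) _ hV le_rfl, List.append_nil]
          rw [C₁.struct, hlast, hmm1]
          simp [List.append_assoc]
        have hnofutA : ∀ pv ∈ A.drop ad.length, ∀ p' : V, pv.1 = some p' → p' ∉ done := by
          have hAdrop : A.drop ad.length = ((none : Option V), c) :: t := by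
            rw [hAeq]
            exact List.drop_left
          intro pv hpv p' hp'
          rw [hAdrop] at hpv
          rcases List.mem_cons.1 hpv with rfl | hin
          · exact absurd hp' (by simp)
          · exact C₁.nofut pv (by rw [hdrop₁]; exact hin) p' hp'
        exact ⟨⟨(((none : Option V), c)) :: t, by rw [← ht, had₁]; simp⟩,
          C₁.nodup, C₁.total, C₁.edge, C₁.hidx, C₁.core, hstruct, hnofutA⟩

    · -- processing step
      have hstep : imBFSAux T EL (fuel + 1) ⟨u :: rest, m, ad⟩
          = imBFSAux T EL fuel (enq (some u) (cands T EL u) ⟨rest, m, ad⟩) := rfl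
      set L := ad.map Prod.snd with hLdef
      set F := fresh m (cands T EL u) with hFdef
      have henq : enq (some u) (cands T EL u) ⟨rest, m, ad⟩
          = ⟨rest ++ F, m ∪ F.toFinset, ad ++ F.map fun c => (some u, c)⟩ :=
        enq_eq _ _ _
      set ad₁ : List (Option V × V) := ad ++ F.map fun c => (some u, c) with had₁
      have hmm1 : ad₁.map Prod.snd = L ++ F := by
        simp [had₁, hLdef, List.map_map, Function.comp]
      have hFnodup : F.Nodup := fresh_nodup _ _
      have hFmem : ∀ x : V, x ∈ F ↔ x ∈ cands T EL u ∧ x ∉ m := fun x => mem_fresh _ _ _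
      have hFnotL : ∀ x ∈ F, x ∉ L := fun x hx hxL => ((hFmem x).1 hx).2 ((h3 x).2 hxL)
      have hUnotdone : u ∉ done := by
        have h2' := h2
        rw [← h1] at h2'
        intro hd
        exact (List.disjoint_of_nodup_append h2') hd (List.mem_cons_self)
      have humem : u ∈ L := by rw [← h1]; simp
      have hdone_sub : ∀ x ∈ done, x ∈ L := by
        intro x hx; rw [← h1]; exact List.mem_append.2 (Or.inl hx)
      -- invariant for the new state
      have hId : Inv T EL ⟨rest ++ F, m ∪ F.toFinset, ad₁⟩ (done ++ [u]) := by
        constructor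
        · show (done ++ [u]) ++ (rest ++ F) = ad₁.map Prod.snd
          rw [hmm1, ← h1]; simp
        · show (ad₁.map Prod.snd).Nodup
          rw [hmm1]
          exact h2.append hFnodup (fun a ha haF => hFnotL a haF ha)
        · intro v
          show v ∈ m ∪ F.toFinset ↔ _
          rw [hmm1]
          simp only [Finset.mem_union, List.mem_toFinset, List.mem_append, h3 v]
        · intro pv hpv p' hp'
          rcases List.mem_append.1 hpv with hin | hin
          · exact List.mem_append.2 (Or.inl (h4 pv hin p' hp'))
          · obtain ⟨c, hc, rfl⟩ := List.mem_map.1 hin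
            injection hp' with hp''
            exact List.mem_append.2 (Or.inr (by simp [← hp'']))
        · intro u' hu' v hv
          rcases List.mem_append.1 hu' with hin | hin
          · exact Finset.mem_union_left _ (h5 u' hin v hv)
          · have huu : u' = u := by simpa using hin
            subst huu
            by_cases hvm : v ∈ m
            · exact Finset.mem_union_left _ hvm
            · exact Finset.mem_union_right _ (List.mem_toFinset.2 ((hFmem v).2 ⟨hv, hvm⟩))
        · intro pv hpv p' hp'
          rcases List.mem_append.1 hpv with hin | hin
          · exact h6 pv hin p' hp'
          · obtain ⟨c, hc, rfl⟩ := List.mem_map.1 hin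
            injection hp' with hp''
            subst hp''
            exact ((hFmem c).1 hc).1
        · intro pv hpv p' hp'
          show (ad₁.map Prod.snd).idxOf p' < (ad₁.map Prod.snd).idxOf pv.2
          rw [hmm1]
          rcases List.mem_append.1 hpv with hin | hin
          · have hpL : p' ∈ L := hdone_sub p' (h4 pv hin p' hp')
            have hvL : pv.2 ∈ L := List.mem_map_of_mem (f := Prod.snd) hin
            rw [List.idxOf_append_of_mem hpL, List.idxOf_append_of_mem hvL]
            exact h7 pv hin p' hp'
          · obtain ⟨c, hc, rfl⟩ := List.mem_map.1 hin
            injection hp' with hp''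
            subst hp''
            have hlt := List.idxOf_lt_length_iff.2 humem
            rw [List.idxOf_append_of_mem humem, List.idxOf_append_of_notMem (hFnotL c hc)]
            omega
        · intro u' hu' pv hpv hcand q' hq'
          show (ad₁.map Prod.snd).idxOf q' ≤ (ad₁.map Prod.snd).idxOf u'
          rw [hmm1]
          rcases List.mem_append.1 hu' with hu'd | hu'u
          · rcases List.mem_append.1 hpv with hin | hin
            · have hqd : q' ∈ done := h4 pv hin q' hq'
              rw [List.idxOf_append_of_mem (hdone_sub q' hqd),
                List.idxOf_append_of_mem (hdone_sub u' hu'd)]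
              exact h8 u' hu'd pv hin hcand q' hq'
            · obtain ⟨c, hc, rfl⟩ := List.mem_map.1 hin
              exact absurd (h5 u' hu'd c hcand) ((hFmem c).1 hc).2
          · have huu : u' = u := by simpa using hu'u
            subst huu
            rcases List.mem_append.1 hpv with hin | hin
            · have hqd : q' ∈ done := h4 pv hin q' hq'
              rw [List.idxOf_append_of_mem (hdone_sub q' hqd),
                List.idxOf_append_of_mem humem, ← h1,
                List.idxOf_append_of_mem hqd,
                List.idxOf_append_of_notMem hUnotdone, List.idxOf_cons_self]
              have := List.idxOf_lt_length_iff.2 hqd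
              omega
            · obtain ⟨c, hc, rfl⟩ := List.mem_map.1 hin
              injection hq' with hq''
              subst hq''
              exact le_refl _
      -- fuel bound for the new state
      have hsub : F.toFinset ⊆ Finset.univ \ m := by
        intro x hx
        rw [List.mem_toFinset] at hx
        exact Finset.mem_sdiff.2 ⟨Finset.mem_univ _, ((hFmem x).1 hx).2⟩
      have hcard : (Finset.univ \ (m ∪ F.toFinset)).card
          = (Finset.univ \ m).card - F.length := by
        have hid : Finset.univ \ (m ∪ F.toFinset) = (Finset.univ \ m) \ F.toFinset := by
          ext x
          simp only [Finset.mem_sdiff, Finset.mem_union, Finset.mem_univ, true_and]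
          tauto
        rw [hid, Finset.card_sdiff_of_subset hsub, List.toFinset_card_of_nodup hFnodup]
      have hFle : F.length ≤ (Finset.univ \ m).card := by
        rw [← List.toFinset_card_of_nodup hFnodup]; exact Finset.card_le_card hsub
      have hf' : (rest ++ F).length + 2 * (Finset.univ \ (m ∪ F.toFinset)).card + 1 ≤ fuel := by
        rw [List.length_append, hcard]
        simp only [List.length_cons] at hf
        omega
      have C₁ := ih ⟨rest ++ F, m ∪ F.toFinset, ad₁⟩ (done ++ [u]) hId hf'
      rw [hstep, henq]
      set A := imBFSAux T EL fuel ⟨rest ++ F, m ∪ F.toFinset, ad₁⟩ with hA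
      obtain ⟨t, ht⟩ := C₁.pre
      have hdrop₁ : A.drop ad₁.length = t := by rw [← ht]; exact List.drop_left
      -- the children of u in the output are exactly the freshly adopted nodes
      have hchu : chA A (some u) = F := by
        have hAeq : A = ad ++ ((F.map fun c => (some u, c)) ++ t) := by
          rw [← ht, had₁, List.append_assoc]
        rw [hAeq, chA_append, chA_append]
        have e1 : chA ad (some u) = [] := by
          have : (ad.filter fun pc => decide (pc.1 = some u)) = [] := by
            rw [List.filter_eq_nil_iff]
            intro pc hpc hdec
            rw [decide_eq_true_eq] at hdec
            exact hUnotdone (h4 pc hpc u hdec)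
          simp [chA, this]
        have e2 : chA (F.map fun c => (some u, c)) (some u) = F := by
          simp [chA, List.filter_map, Function.comp, List.map_map]
        have e3 : chA t (some u) = [] := by
          have : (t.filter fun pc => decide (pc.1 = some u)) = [] := by
            rw [List.filter_eq_nil_iff]
            intro pc hpc hdec
            rw [decide_eq_true_eq] at hdec
            exact C₁.nofut pc (by rw [hdrop₁]; exact hpc) u hdec (by simp)
          simp [chA, this]
        rw [e1, e2, e3]
        simp
      -- rank facts and vanishing of deep levels
      have hrank : ∀ a b : V, b ∈ chA A (some a) →
          (A.map Prod.snd).idxOf a < (A.map Prod.snd).idxOf b ∧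
          (A.map Prod.snd).idxOf b < Fintype.card V := by
        intro a b hb
        obtain ⟨pc, hpc, hfst, hsnd⟩ := mem_chA.1 hb
        constructor
        · have := C₁.hidx pc hpc a hfst
          rwa [hsnd] at this
        · have hbL : b ∈ A.map Prod.snd := hsnd ▸ List.mem_map_of_mem (f := Prod.snd) hpc
          exact lt_of_lt_of_le (List.idxOf_lt_length_iff.2 hbL) (C₁.nodup.length_le_card)
      have hvan := iterate_ex_eq_nil (fun v => chA A (some v))
        (fun x => (A.map Prod.snd).idxOf x) (Fintype.card V) hrank
      have hWl : Wl (fun v => chA A (some v)) (Fintype.card V + 1)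
            (ex (fun v => chA A (some v)) (u :: rest))
          = F ++ Wl (fun v => chA A (some v)) (Fintype.card V + 1)
            (ex (fun v => chA A (some v)) (rest ++ F)) := by
        rw [ex_cons, hchu, ex_append,
          Wl_shift _ (Fintype.card V) F _ (hvan (Fintype.card V) F hV le_rfl),
          ← ex_append]
      have hRR : phases A (m ∪ F.toFinset) = phases A m := by
        unfold phases
        congr 1
        apply List.filter_congr
        intro c hc
        have hcnotF : c ∉ F := by
          intro hcF
          obtain ⟨pc1, hpc1, hf1, hs1⟩ := mem_chA.1 hc
          obtain ⟨pc2, hpc2, hf2, hs2⟩ := mem_chA.1 (hchu ▸ hcF : c ∈ chA A (some u))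
          have hpc12 : pc1 = pc2 :=
            List.inj_on_of_nodup_map C₁.nodup hpc1 hpc2 (by rw [hs1, hs2])
          rw [hpc12, hf2] at hf1
          exact Option.some_ne_none _ hf1
        simp [Finset.mem_union, List.mem_toFinset, hcnotF]
      have hstruct : A.map Prod.snd = L
          ++ Wl (fun v => chA A (some v)) (Fintype.card V + 1)
              (ex (fun v => chA A (some v)) (u :: rest))
          ++ phases A m := by
        rw [hWl, ← hRR, C₁.struct, hmm1]
        simp [List.append_assoc]
      have hnofutA : ∀ pv ∈ A.drop ad.length, ∀ p' : V, pv.1 = some p' → p' ∉ done := by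
        have hAdrop : A.drop ad.length = (F.map fun c => (some u, c)) ++ t := by
          rw [← ht, had₁, List.append_assoc]
          exact List.drop_left
        intro pv hpv p' hp'
        rw [hAdrop] at hpv
        rcases List.mem_append.1 hpv with hin | hin
        · obtain ⟨c, hc, rfl⟩ := List.mem_map.1 hin
          injection hp' with hp''
          subst hp''
          exact hUnotdone
        · intro hd
          exact C₁.nofut pv (by rw [hdrop₁]; exact hin) p' hp' (List.mem_append.2 (Or.inl hd))
      exact ⟨⟨(F.map fun c => (some u, c)) ++ t,
          by rw [← ht, had₁, List.append_assoc]⟩,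
        C₁.nodup, C₁.total, C₁.edge, C₁.hidx, C₁.core, hstruct, hnofutA⟩

lemma find?_of_nodup_map : ∀ (A : List (Option V × V)), (A.map Prod.snd).Nodup →
    ∀ pv ∈ A, A.find? (fun pc => decide (pc.2 = pv.2)) = some pv := by
  intro A
  induction A with
  | nil => intro _ pv hpv; simp at hpv
  | cons a A ih =>
    intro hnd pv hpv
    by_cases ha : a.2 = pv.2
    · have hav : a = pv := by
        rcases List.mem_cons.1 hpv with rfl | hin
        · rfl
        · exfalso
          have hmem : a.2 ∈ A.map Prod.snd := ha ▸ List.mem_map_of_mem (f := Prod.snd) hin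
          exact (List.nodup_cons.1 (by simpa using hnd)).1 hmem
      subst hav
      simp
    · rcases List.mem_cons.1 hpv with rfl | hin
      · exact absurd rfl ha
      · rw [List.find?_cons_of_neg (l := A) (by simpa using ha)]
        exact ih (List.nodup_cons.1 (by simpa using hnd)).2 pv hin

end Stmt4Aux
theorem stmt4 {V : Type} [Fintype V] [DecidableEq V]
    (hV : 1 ≤ Fintype.card V) (E : Finset (V × V))
    (hE : ∀ e ∈ E, e.1 ≠ e.2)
    (T : PreTree V) (hT : IsOST E T)
    (EL : List (V × V)) (hEL : ∀ e ∈ EL, e ∈ E) :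
    IsBFSTree (treeEdges T ∪ EL.toFinset) (imBFS T EL) := by
  classical
  set A := imBFSAux T EL (2 * Fintype.card V + 1) ⟨[], ∅, []⟩ with hA
  have hInv0 : Inv T EL ⟨[], ∅, []⟩ [] := by constructor <;> simp
  have hfuel0 : ([] : List V).length + 2 * (Finset.univ \ (∅ : Finset V)).card + 1
      ≤ 2 * Fintype.card V + 1 := by
    simp [Finset.card_univ]
  have C := mainGL (T := T) (EL := EL) E hT hV (2 * Fintype.card V + 1) ⟨[], ∅, []⟩ []
    hInv0 hfuel0
  rw [← hA] at C
  -- defeq facts about the produced tree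
  have hch : ∀ w, (imBFS T EL).children w = chA A w := fun w => rfl
  have himp : ∀ v : V, (imBFS T EL).parent v =
      (match A.find? (fun pc => decide (pc.2 = v)) with
        | some pc => pc.1 | none => none) := fun v => rfl
  have hpar : ∀ pv ∈ A, (imBFS T EL).parent pv.2 = pv.1 := by
    intro pv hpv
    rw [himp, find?_of_nodup_map A C.nodup pv hpv]
  have hex : ∀ v : V, ∃ pv ∈ A, pv.2 = v := by
    intro v
    obtain ⟨pv, hpv, hsnd⟩ := List.mem_map.1 (C.total v)
    exact ⟨pv, hpv, hsnd⟩
  have hparent_mem : ∀ (v : V) (p : Option V), (imBFS T EL).parent v = p → (p, v) ∈ A := by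
    intro v p hp
    obtain ⟨pv, hpv, hsnd⟩ := hex v
    have := hpar pv hpv
    rw [hsnd, hp] at this
    have hpveq : pv = (p, v) := by
      rcases pv with ⟨pv1, pv2⟩
      simp only at hsnd this
      rw [hsnd, this]
    rw [← hpveq]
    exact hpv
  -- membership in children ↔ parent
  have hmemiff : ∀ (w : Option V) (v : V),
      v ∈ (imBFS T EL).children w ↔ (imBFS T EL).parent v = w := by
    intro w v
    rw [hch]
    constructor
    · intro hv
      obtain ⟨pc, hpc, hfst, hsnd⟩ := mem_chA.1 hv
      rw [← hsnd, hpar pc hpc, hfst]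
    · intro hp
      obtain ⟨pv, hpv, hsnd⟩ := hex v
      have hfst : pv.1 = w := by
        have := hpar pv hpv
        rw [hsnd, hp] at this
        exact this.symm
      exact mem_chA.2 ⟨pv, hpv, hfst, hsnd⟩
  -- reachability of the dummy root
  have hreach : ∀ v : V, ∃ k, (parentStep (imBFS T EL))^[k] (some v) = none := by
    have H : ∀ (N : ℕ) (v : V), (A.map Prod.snd).idxOf v < N →
        ∃ k, (parentStep (imBFS T EL))^[k] (some v) = none := by
      intro N
      induction N with
      | zero => intro v hv; omega
      | succ N ihN =>
        intro v hv
        obtain ⟨pv, hpv, hsnd⟩ := hex v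
        have hpv2 : (imBFS T EL).parent v = pv.1 := by rw [← hsnd]; exact hpar pv hpv
        rcases hp1 : pv.1 with _ | p
        · refine ⟨1, ?_⟩
          rw [Function.iterate_one]
          show (imBFS T EL).parent v = none
          rw [hpv2, hp1]
        · have hlt := C.hidx pv hpv p hp1
          rw [hsnd] at hlt
          obtain ⟨k, hk⟩ := ihN p (by omega)
          refine ⟨k + 1, ?_⟩
          rw [Function.iterate_succ_apply]
          have hps : parentStep (imBFS T EL) (some v) = some p := by
            show (imBFS T EL).parent v = some p
            rw [hpv2, hp1]
          rw [hps, hk]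
    intro v
    exact H ((A.map Prod.snd).idxOf v + 1) v (by omega)
  -- the tree edges of the output lie in the new edge set
  have hedge : ∀ v u : V, (imBFS T EL).parent v = some u →
      (u, v) ∈ treeEdges T ∪ EL.toFinset := by
    intro v u hp
    have hmem : ((some u : Option V), v) ∈ A := hparent_mem v (some u) hp
    have hc := C.edge (some u, v) hmem u rfl
    rcases List.mem_append.1 hc with hin | hin
    · have hpt : T.parent v = some u := (hT.2.2.2 (some u) v).1 hin
      exact Finset.mem_union_left _ (by simpa [treeEdges] using hpt)
    · obtain ⟨e, he, hsnd⟩ := List.mem_map.1 hin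
      rw [List.mem_filter] at he
      have he1 : e.1 = u := by simpa using he.2
      have heq : e = (u, v) := by
        rcases e with ⟨e1, e2⟩
        simp only at he1 hsnd
        rw [he1, hsnd]
      refine Finset.mem_union_right _ ?_
      rw [List.mem_toFinset, ← heq]
      exact he.1
  -- children lists have no duplicates
  have hndch : ∀ w, ((imBFS T EL).children w).Nodup := by
    intro w
    rw [hch]
    exact (List.Sublist.map Prod.snd (List.filter_sublist (l := A))).nodup C.nodup
  -- the breadth-first listing of the output coincides with the adoption order
  have hbfoList : bfoList (imBFS T EL) = A.map Prod.snd := by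
    have hexpand : expand (imBFS T EL) = ex (fun v => chA A (some v)) := by
      funext Q; rfl
    show (chA A none).flatMap (fun c => (List.range (Fintype.card V + 1)).flatMap
        fun k => (expand (imBFS T EL))^[k] [c]) = A.map Prod.snd
    rw [hexpand]
    have h0 := C.struct
    rw [ex_nil, Wl_nil] at h0
    simp only [List.map_nil, List.nil_append] at h0
    rw [h0]
    unfold phases
    have hfil : (chA A none).filter (fun c => decide (c ∉ (∅ : Finset V))) = chA A none := by
      rw [List.filter_eq_self]
      intro a _
      simp
    rw [hfil]
    rfl
  have hbfo : ∀ x : V, bfo (imBFS T EL) x = (A.map Prod.snd).idxOf x + 1 := by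
    intro x
    unfold bfo
    rw [hbfoList]
  refine ⟨⟨hreach, hedge, fun w => hndch w, hmemiff⟩, ?_⟩
  rintro e he ⟨hlt1, hne, hlt2⟩
  have hcand : e.2 ∈ cands T EL e.1 := by
    rcases Finset.mem_union.1 he with hin | hin
    · have hpt : T.parent e.2 = some e.1 := by
        have := (Finset.mem_filter.1 hin).2
        simpa using this
      exact List.mem_append.2 (Or.inl ((hT.2.2.2 (some e.1) e.2).2 hpt))
    · refine List.mem_append.2 (Or.inr ?_)
      refine List.mem_map.2 ⟨e, ?_, rfl⟩
      rw [List.mem_filter]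
      exact ⟨List.mem_toFinset.1 hin, by simp⟩
  rcases hp : (imBFS T EL).parent e.2 with _ | p
  · exact hne hp
  · have hmem : ((some p : Option V), e.2) ∈ A := hparent_mem e.2 (some p) hp
    have hcore := C.core e.1 (some p, e.2) hmem hcand p rfl
    rw [hp] at hlt2
    have hbo : bfoOpt (imBFS T EL) (some p) = bfo (imBFS T EL) p := rfl
    rw [hbo, hbfo, hbfo] at hlt2
    omega

end BFSFormal
end

section
/- During the run of EE-BFS, for all integers i and j with j > i ≥ 1, every edge e = (u, v) ∈ E such that the tree T current during the j-th pass satisfies depth′(u, T) ≤ i and depth′(v, T) ≤ i is not a V-BFS edge with respect to T. -/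
namespace BFSFormal

variable {V : Type} [Fintype V] [DecidableEq V]

set_option linter.unusedSectionVars false

section Basics

variable {V : Type} [Fintype V] [DecidableEq V]

/-- Structural part of `IsOST` not referring to the edge set. -/
def Good (T : PreTree V) : Prop :=
  (∀ v : V, ∃ k : ℕ, (parentStep T)^[k] (some v) = none) ∧
  (∀ w : Option V, (T.children w).Nodup) ∧
  (∀ (w : Option V) (v : V), v ∈ T.children w ↔ T.parent v = w)

theorem IsOST.good {E : Finset (V × V)} {T : PreTree V} (h : IsOST E T) : Good T :=
  ⟨h.1, h.2.2.1, h.2.2.2⟩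

@[simp] theorem parentStep_none (T : PreTree V) : parentStep T none = none := rfl

@[simp] theorem parentStep_some (T : PreTree V) (v : V) :
    parentStep T (some v) = T.parent v := rfl

theorem iter_none (T : PreTree V) (k : ℕ) : (parentStep T)^[k] none = none := by
  induction k with
  | zero => rfl
  | succ n ih => rw [Function.iterate_succ_apply, parentStep_none, ih]

theorem iter_none_mono {T : PreTree V} {x : Option V} {k m : ℕ}
    (h : (parentStep T)^[k] x = none) (hm : k ≤ m) : (parentStep T)^[m] x = none := by
  obtain ⟨d, rfl⟩ := Nat.exists_eq_add_of_le hm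
  rw [Nat.add_comm, Function.iterate_add_apply, h, iter_none]

variable {T : PreTree V}

theorem depth_le_iff (hT : Good T) (v : V) (k : ℕ) :
    (parentStep T)^[k] (some v) = none ↔ depth T v ≤ k := by
  constructor
  · intro h; exact Nat.sInf_le h
  · intro h
    have hmem := Nat.sInf_mem (s := {k : ℕ | (parentStep T)^[k] (some v) = none}) (hT.1 v)
    exact iter_none_mono hmem h

theorem iter_ne_none (hT : Good T) {v : V} {k : ℕ} (h : k < depth T v) :
    (parentStep T)^[k] (some v) ≠ none := by
  intro hn
  exact absurd ((depth_le_iff hT v k).1 hn) (Nat.not_le_of_lt h)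

theorem iter_depth (hT : Good T) (v : V) :
    (parentStep T)^[depth T v] (some v) = none :=
  (depth_le_iff hT v _).2 le_rfl

theorem depth_pos (hT : Good T) (v : V) : 1 ≤ depth T v := by
  by_contra h
  have h0 : depth T v = 0 := by omega
  have := iter_depth hT v
  rw [h0] at this
  simp at this

theorem chain_some (hT : Good T) {v : V} {k : ℕ} (h : k < depth T v) :
    ∃ x : V, (parentStep T)^[k] (some v) = some x := by
  cases hx : (parentStep T)^[k] (some v) with
  | none => exact absurd hx (iter_ne_none hT h)
  | some x => exact ⟨x, rfl⟩

theorem depth_parent_none (hT : Good T) {v : V} (h : T.parent v = none) :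
    depth T v = 1 := by
  refine le_antisymm ?_ (depth_pos hT v)
  exact (depth_le_iff hT v 1).1 (by simpa using h)

theorem depth_parent_some (hT : Good T) {v p : V} (h : T.parent v = some p) :
    depth T v = depth T p + 1 := by
  have key : ∀ k : ℕ, (parentStep T)^[k + 1] (some v) = (parentStep T)^[k] (some p) := by
    intro k
    rw [Function.iterate_succ_apply, parentStep_some, h]
  have h1 : depth T v ≤ depth T p + 1 :=
    (depth_le_iff hT v _).1 (by rw [key]; exact iter_depth hT p)
  have h2 : depth T p + 1 ≤ depth T v := by
    by_contra hc
    have hlt : depth T v ≤ depth T p := by omega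
    obtain ⟨m, hm⟩ : ∃ m, depth T v = m + 1 := ⟨depth T v - 1, by have := depth_pos hT v; omega⟩
    have : (parentStep T)^[m] (some p) = none := by
      rw [← key, ← hm]; exact iter_depth hT v
    have := (depth_le_iff hT p m).1 this
    omega
  omega

theorem desc_depth (hT : Good T) {w v : V} {k : ℕ}
    (h : (parentStep T)^[k] (some w) = some v) : depth T w = depth T v + k := by
  have key : ∀ m : ℕ, (parentStep T)^[m + k] (some w) = (parentStep T)^[m] (some v) := by
    intro m; rw [Function.iterate_add_apply, h]
  have h1 : depth T w ≤ depth T v + k :=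
    (depth_le_iff hT w _).1 (by rw [key]; exact iter_depth hT v)
  have h2 : depth T v + k ≤ depth T w := by
    by_contra hc
    have hv := depth_pos hT v
    have hle : depth T w ≤ (depth T v - 1) + k := by omega
    have := (depth_le_iff hT w _).2 hle
    rw [key] at this
    have := (depth_le_iff hT v _).1 this
    omega
  omega

theorem topAnc_spec (hT : Good T) (v : V) :
    ∃ c : V, topAnc T v = some c ∧ T.parent c = none := by
  obtain ⟨c, hc⟩ := chain_some hT (show depth T v - 1 < depth T v by
    have := depth_pos hT v; omega)
  refine ⟨c, hc, ?_⟩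
  have hd : depth T v - 1 + 1 = depth T v := by have := depth_pos hT v; omega
  have := iter_depth hT v
  rw [← hd, Function.iterate_succ_apply', hc] at this
  simpa using this

theorem topAnc_root (hT : Good T) {v : V} (h : T.parent v = none) :
    topAnc T v = some v := by
  unfold topAnc
  rw [depth_parent_none hT h]
  rfl

theorem topAnc_parent (hT : Good T) {v p : V} (h : T.parent v = some p) :
    topAnc T v = topAnc T p := by
  unfold topAnc
  rw [depth_parent_some hT h]
  have hp := depth_pos hT p
  have : depth T p + 1 - 1 = (depth T p - 1) + 1 := by omega
  rw [this, Function.iterate_succ_apply, parentStep_some, h]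

theorem desc_topAnc (hT : Good T) {w v : V} {k : ℕ}
    (h : (parentStep T)^[k] (some w) = some v) : topAnc T w = topAnc T v := by
  unfold topAnc
  have hdw := desc_depth hT h
  have hv := depth_pos hT v
  rw [hdw]
  have e1 : depth T v + k - 1 = (depth T v - 1) + k := by omega
  rw [e1, Function.iterate_add_apply, h]

theorem depth_le_card (hT : Good T) (v : V) : depth T v ≤ Fintype.card V := by
  have hfun : ∀ i : Fin (depth T v), ∃ x : V, (parentStep T)^[(i : ℕ)] (some v) = some x :=
    fun i => chain_some hT i.2
  choose f hf using hfun
  have key : ∀ i j : Fin (depth T v), (i : ℕ) < (j : ℕ) → f i ≠ f j := by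
    intro i j hlt hij
    have hchain : (parentStep T)^[(j : ℕ)] (some v) = (parentStep T)^[(i : ℕ)] (some v) := by
      rw [hf i, hf j, hij]
    have hd : (parentStep T)^[(depth T v - (j : ℕ)) + (j : ℕ)] (some v) = none := by
      have : (depth T v - (j : ℕ)) + (j : ℕ) = depth T v := by have := j.2; omega
      rw [this]; exact iter_depth hT v
    rw [Function.iterate_add_apply, hchain, ← Function.iterate_add_apply] at hd
    have := (depth_le_iff hT v _).1 hd
    have := j.2
    omega
  have hinj : Function.Injective f := by
    intro i j hij
    rcases Nat.lt_trichotomy (i : ℕ) (j : ℕ) with h | h | h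
    · exact absurd hij (key i j h)
    · exact Fin.ext h
    · exact absurd hij.symm (key j i h)
  simpa using Fintype.card_le_of_injective f hinj

end Basics
section Lists

variable {α β : Type _}

theorem nodup_flatMap' [DecidableEq β] {L : List α} {g : α → List β}
    (hL : L.Nodup) (hg : ∀ x ∈ L, (g x).Nodup)
    (hdisj : ∀ x ∈ L, ∀ y ∈ L, x ≠ y → ∀ w, w ∈ g x → w ∉ g y) :
    (L.flatMap g).Nodup := by
  induction L with
  | nil => simp
  | cons a l ih =>
    rw [List.flatMap_cons, List.nodup_append]
    refine ⟨hg a (by simp), ih (List.nodup_cons.1 hL).2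
      (fun x hx => hg x (by simp [hx]))
      (fun x hx y hy hxy => hdisj x (by simp [hx]) y (by simp [hy]) hxy), ?_⟩
    intro w hw w' hw' hww
    subst hww
    obtain ⟨y, hy, hwy⟩ := List.mem_flatMap.1 hw'
    have hay : a ≠ y := by rintro rfl; exact (List.nodup_cons.1 hL).1 hy
    exact hdisj a (by simp) y (by simp [hy]) hay w hw hwy

theorem mem_of_mem_cons_ne [DecidableEq α] {a x : α} {l : List α}
    (h : x ∈ a :: l) (hne : x ≠ a) : x ∈ l := by
  rcases List.mem_cons.1 h with rfl | h
  · exact absurd rfl hne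
  · exact h

theorem idx_append_right [DecidableEq α] {l₁ l₂ : List α} {a : α} (h : a ∉ l₁) :
    (l₁ ++ l₂).idxOf a = l₁.length + l₂.idxOf a := by
  induction l₁ with
  | nil => simp
  | cons b l ih =>
    have hba : (b == a) = false := beq_eq_false_iff_ne.2 (by rintro rfl; exact h (by simp))
    rw [List.cons_append, List.idxOf_cons, hba]
    simp only [cond_false]
    rw [ih (fun hm => h (by simp [hm]))]
    simp only [List.length_cons]
    omega

theorem idx_cons_ne [DecidableEq α] {a y : α} (l : List α) (hne : ¬ a = y) :
    (a :: l).idxOf y = l.idxOf y + 1 := by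
  rw [List.idxOf_cons]
  have hb : (a == y) = false := beq_eq_false_iff_ne.2 hne
  rw [hb]
  rfl

theorem idx_flatMap_of_blocks [DecidableEq α] [DecidableEq β] {L : List α} {g : α → List β}
    (hnd : (L.flatMap g).Nodup) (hL : L.Nodup) {cx cy : α} {x y : β}
    (hcx : cx ∈ L) (hcy : cy ∈ L) (hx : x ∈ g cx) (hy : y ∈ g cy)
    (hlt : L.idxOf cx < L.idxOf cy) :
    (L.flatMap g).idxOf x < (L.flatMap g).idxOf y := by
  induction L with
  | nil => simp at hcx
  | cons a l ih =>
    rw [List.flatMap_cons] at hnd ⊢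
    have hdisj := (List.nodup_append.1 hnd).2.2
    by_cases hax : a = cx
    · subst hax
      have hcy' : cy ∈ l := by
        have : a ≠ cy := by
          rintro rfl
          simp [List.idxOf_cons] at hlt
        exact mem_of_mem_cons_ne hcy (Ne.symm this)
      have hyl : y ∈ l.flatMap g := List.mem_flatMap.2 ⟨cy, hcy', hy⟩
      have hyn : y ∉ g a := fun hmem => hdisj _ hmem _ hyl rfl
      rw [List.idxOf_append_of_mem hx, idx_append_right hyn]
      calc List.idxOf x (g a) < (g a).length := List.idxOf_lt_length_iff.2 hx
        _ ≤ (g a).length + List.idxOf y (l.flatMap g) := Nat.le_add_right _ _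
    · have hay : a ≠ cy := by
        rintro rfl
        rw [List.idxOf_cons_self] at hlt
        omega
      have hcx' : cx ∈ l := mem_of_mem_cons_ne hcx (fun h => hax h.symm)
      have hcy' : cy ∈ l := mem_of_mem_cons_ne hcy (fun h => hay h.symm)
      have hxl : x ∈ l.flatMap g := List.mem_flatMap.2 ⟨cx, hcx', hx⟩
      have hyl : y ∈ l.flatMap g := List.mem_flatMap.2 ⟨cy, hcy', hy⟩
      have hxn : x ∉ g a := fun hmem => hdisj _ hmem _ hxl rfl
      have hyn : y ∉ g a := fun hmem => hdisj _ hmem _ hyl rfl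
      rw [idx_append_right hxn, idx_append_right hyn]
      have hlt' : l.idxOf cx < l.idxOf cy := by
        rw [idx_cons_ne l hax, idx_cons_ne l hay] at hlt
        omega
      have := ih (List.nodup_append.1 hnd).2.1 (List.nodup_cons.1 hL).2 hcx' hcy' hlt'
      omega

theorem idx_flatMap_same_block [DecidableEq α] [DecidableEq β] {L : List α} {g : α → List β}
    (hnd : (L.flatMap g).Nodup) {c : α} {x y : β}
    (hc : c ∈ L) (hx : x ∈ g c) (hy : y ∈ g c)
    (hlt : (g c).idxOf x < (g c).idxOf y) :
    (L.flatMap g).idxOf x < (L.flatMap g).idxOf y := by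
  induction L with
  | nil => simp at hc
  | cons a l ih =>
    rw [List.flatMap_cons] at hnd ⊢
    have hdisj := (List.nodup_append.1 hnd).2.2
    by_cases hac : a = c
    · subst hac
      rw [List.idxOf_append_of_mem hx, List.idxOf_append_of_mem hy]
      exact hlt
    · have hc' : c ∈ l := mem_of_mem_cons_ne hc (fun h => hac h.symm)
      have hxl : x ∈ l.flatMap g := List.mem_flatMap.2 ⟨c, hc', hx⟩
      have hyl : y ∈ l.flatMap g := List.mem_flatMap.2 ⟨c, hc', hy⟩
      have hxn : x ∉ g a := fun hmem => hdisj _ hmem _ hxl rfl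
      have hyn : y ∉ g a := fun hmem => hdisj _ hmem _ hyl rfl
      rw [idx_append_right hxn, idx_append_right hyn]
      have := ih (List.nodup_append.1 hnd).2.1 hc'
      omega

theorem takeWhile_sum_le [DecidableEq α] (f : α → ℕ) :
    ∀ (l : List α) (x y : α), x ∈ l → l.idxOf x < l.idxOf y →
      ((l.takeWhile (fun z => decide (z ≠ x))).map f).sum + f x ≤
      ((l.takeWhile (fun z => decide (z ≠ y))).map f).sum := by
  intro l
  induction l with
  | nil => intro x y hx; simp at hx
  | cons a l ih =>
    intro x y hx hlt
    have hay : a ≠ y := by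
      rintro rfl
      rw [List.idxOf_cons_self] at hlt
      omega
    by_cases hax : a = x
    · subst hax
      have h1 : List.takeWhile (fun z => decide (z ≠ a)) (a :: l) = [] := by
        simp [List.takeWhile]
      have h2 : List.takeWhile (fun z => decide (z ≠ y)) (a :: l)
          = a :: List.takeWhile (fun z => decide (z ≠ y)) l := by
        simp [List.takeWhile, hay]
      rw [h1, h2]
      simp
    · have hx' : x ∈ l := mem_of_mem_cons_ne hx (fun h => hax h.symm)
      have h1 : List.takeWhile (fun z => decide (z ≠ x)) (a :: l)
          = a :: List.takeWhile (fun z => decide (z ≠ x)) l := by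
        simp [List.takeWhile, hax]
      have h2 : List.takeWhile (fun z => decide (z ≠ y)) (a :: l)
          = a :: List.takeWhile (fun z => decide (z ≠ y)) l := by
        simp [List.takeWhile, hay]
      rw [h1, h2]
      have hlt' : l.idxOf x < l.idxOf y := by
        rw [idx_cons_ne l hax, idx_cons_ne l hay] at hlt
        omega
      have := ih x y hx' hlt'
      simp only [List.map_cons, List.sum_cons]
      omega

theorem idx_filter_lt_iff [DecidableEq α] (p : α → Bool) :
    ∀ (L : List α) (x y : α), L.Nodup → x ∈ L → y ∈ L → x ≠ y →
      p x = true → p y = true →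
      (L.idxOf x < L.idxOf y ↔ (L.filter p).idxOf x < (L.filter p).idxOf y) := by
  intro L
  induction L with
  | nil => intro x y _ hx; simp at hx
  | cons a l ih =>
    intro x y hnd hx hy hxy hpx hpy
    by_cases hax : a = x
    · subst hax
      rw [List.idxOf_cons_self, idx_cons_ne l hxy, List.filter_cons_of_pos hpx,
        List.idxOf_cons_self, idx_cons_ne (l.filter p) hxy]
      omega
    · by_cases hay : a = y
      · subst hay
        rw [idx_cons_ne l hax, List.idxOf_cons_self, List.filter_cons_of_pos hpy,
          idx_cons_ne (l.filter p) hax, List.idxOf_cons_self]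
        omega
      · have hx' : x ∈ l := mem_of_mem_cons_ne hx (fun h => hax h.symm)
        have hy' : y ∈ l := mem_of_mem_cons_ne hy (fun h => hay h.symm)
        have base := ih x y (List.nodup_cons.1 hnd).2 hx' hy' hxy hpx hpy
        rw [idx_cons_ne l hax, idx_cons_ne l hay]
        by_cases hpa : p a = true
        · rw [List.filter_cons_of_pos hpa, idx_cons_ne _ hax, idx_cons_ne _ hay]
          omega
        · rw [List.filter_cons_of_neg (by simpa using hpa)]
          omega

end Lists

section BFOStructure

set_option linter.unusedSectionVars false

variable {V : Type} [Fintype V] [DecidableEq V] {T : PreTree V}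

/-- level `k` of the subtree rooted at `c`. -/
def lvl (T : PreTree V) (c : V) (k : ℕ) : List V := (expand T)^[k] [c]

/-- the block of the subtree rooted at `c` in the breadth-first list. -/
def blk (T : PreTree V) (c : V) : List V :=
  (List.range (Fintype.card V + 1)).flatMap (lvl T c)

theorem idx_range {n k : ℕ} (h : k < n) : (List.range n).idxOf k = k := by
  have hlt : (List.range n).idxOf k < (List.range n).length :=
    List.idxOf_lt_length_iff.2 (by simpa using h)
  have := List.getElem_idxOf hlt
  rw [List.getElem_range] at this
  exact this

theorem bfoList_eq (T : PreTree V) : bfoList T = (T.children none).flatMap (blk T) := rfl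

theorem mem_children_iff (hT : Good T) {w : Option V} {x : V} :
    x ∈ T.children w ↔ T.parent x = w := hT.2.2 w x

theorem expand_mem (hT : Good T) {L : List V} {w : V} :
    w ∈ expand T L ↔ ∃ x ∈ L, T.parent w = some x := by
  unfold expand
  rw [List.mem_flatMap]
  constructor
  · rintro ⟨x, hx, hw⟩; exact ⟨x, hx, (mem_children_iff hT).1 hw⟩
  · rintro ⟨x, hx, hw⟩; exact ⟨x, hx, (mem_children_iff hT).2 hw⟩

theorem lvl_mem (hT : Good T) {c : V} (hc : T.parent c = none) (k : ℕ) {w : V} :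
    w ∈ lvl T c k ↔ topAnc T w = some c ∧ depth T w = k + 1 := by
  induction k generalizing w with
  | zero =>
    unfold lvl
    simp only [Function.iterate_zero, id_eq, List.mem_singleton]
    constructor
    · rintro rfl; exact ⟨topAnc_root hT hc, depth_parent_none hT hc⟩
    · rintro ⟨h1, h2⟩
      have hpw : T.parent w = none := by
        cases hpw : T.parent w with
        | none => rfl
        | some p =>
          have := depth_parent_some hT hpw
          have := depth_pos hT p
          omega
      have := topAnc_root hT hpw
      rw [this] at h1
      exact (Option.some_injective V h1)
  | succ k ih =>
    unfold lvl at *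
    rw [Function.iterate_succ_apply']
    constructor
    · intro hw
      obtain ⟨x, hx, hpw⟩ := (expand_mem hT).1 hw
      obtain ⟨h1, h2⟩ := ih.1 hx
      exact ⟨(topAnc_parent hT hpw).trans h1, by rw [depth_parent_some hT hpw, h2]⟩
    · rintro ⟨h1, h2⟩
      cases hpw : T.parent w with
      | none =>
        have := depth_parent_none hT hpw
        omega
      | some p =>
        have hdp : depth T p = k + 1 := by
          have := depth_parent_some hT hpw
          omega
        have htp : topAnc T p = some c := by
          rw [← topAnc_parent hT hpw]; exact h1
        exact (expand_mem hT).2 ⟨p, ih.2 ⟨htp, hdp⟩, hpw⟩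

theorem lvl_nodup (hT : Good T) (c : V) (k : ℕ) : (lvl T c k).Nodup := by
  induction k with
  | zero => simp [lvl]
  | succ k ih =>
    have : lvl T c (k + 1) = (lvl T c k).flatMap (fun v => T.children (some v)) := by
      unfold lvl
      rw [Function.iterate_succ_apply']
      rfl
    rw [this]
    refine nodup_flatMap' ih (fun x _ => hT.2.1 (some x)) ?_
    intro x _ y _ hxy w hwx hwy
    have h1 := (mem_children_iff hT).1 hwx
    have h2 := (mem_children_iff hT).1 hwy
    rw [h1] at h2
    exact hxy (Option.some_injective V h2)

theorem blk_mem (hT : Good T) {c : V} (hc : T.parent c = none) {w : V} :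
    w ∈ blk T c ↔ topAnc T w = some c := by
  unfold blk
  rw [List.mem_flatMap]
  constructor
  · rintro ⟨k, _, hw⟩; exact ((lvl_mem hT hc k).1 hw).1
  · intro h
    refine ⟨depth T w - 1, List.mem_range.2 ?_, (lvl_mem hT hc _).2 ⟨h, ?_⟩⟩
    · have := depth_le_card hT w; omega
    · have := depth_pos hT w; omega

theorem blk_nodup (hT : Good T) {c : V} (hc : T.parent c = none) : (blk T c).Nodup := by
  refine nodup_flatMap' List.nodup_range (fun k _ => lvl_nodup hT c k) ?_
  intro k _ m _ hkm w hwk hwm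
  have h1 := ((lvl_mem hT hc k).1 hwk).2
  have h2 := ((lvl_mem hT hc m).1 hwm).2
  omega

theorem parent_none_of_mem_rootChildren (hT : Good T) {c : V} (hc : c ∈ T.children none) :
    T.parent c = none := (mem_children_iff hT).1 hc

theorem bfoList_nodup (hT : Good T) : (bfoList T).Nodup := by
  rw [bfoList_eq]
  refine nodup_flatMap' (hT.2.1 none) (fun c hc => blk_nodup hT
    (parent_none_of_mem_rootChildren hT hc)) ?_
  intro x hx y hy hxy w hwx hwy
  have h1 := (blk_mem hT (parent_none_of_mem_rootChildren hT hx)).1 hwx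
  have h2 := (blk_mem hT (parent_none_of_mem_rootChildren hT hy)).1 hwy
  rw [h1] at h2
  exact hxy (Option.some_injective V h2)

theorem mem_bfoList (hT : Good T) (v : V) : v ∈ bfoList T := by
  obtain ⟨c, hc, hpc⟩ := topAnc_spec hT v
  rw [bfoList_eq, List.mem_flatMap]
  exact ⟨c, (mem_children_iff hT).2 hpc, (blk_mem hT hpc).2 hc⟩

/-- the root of the subtree containing `v`, as an element of `V`. -/
noncomputable def anc (T : PreTree V) (v : V) : V := (topAnc T v).getD v

theorem topAnc_eq_anc (hT : Good T) (v : V) : topAnc T v = some (anc T v) := by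
  obtain ⟨c, hc, _⟩ := topAnc_spec hT v
  rw [anc, hc]
  rfl

theorem anc_parent_none (hT : Good T) (v : V) : T.parent (anc T v) = none := by
  obtain ⟨c, hc, hpc⟩ := topAnc_spec hT v
  have := topAnc_eq_anc hT v
  rw [hc] at this
  rwa [← Option.some_injective V this]

theorem anc_mem_rootChildren (hT : Good T) (v : V) : anc T v ∈ T.children none :=
  (mem_children_iff hT).2 (anc_parent_none hT v)

theorem mem_lvl_self (hT : Good T) (v : V) :
    v ∈ lvl T (anc T v) (depth T v - 1) := by
  refine (lvl_mem hT (anc_parent_none hT v) _).2 ⟨topAnc_eq_anc hT v, ?_⟩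
  have := depth_pos hT v
  omega

/-- position of the subtree of `v` among the children of the root. -/
noncomputable def pos (T : PreTree V) (v : V) : ℕ := (T.children none).idxOf (anc T v)

/-- position of `v` within its level list. -/
noncomputable def lidx (T : PreTree V) (v : V) : ℕ :=
  (lvl T (anc T v) (depth T v - 1)).idxOf v

/-- lexicographic key order used to compare breadth-first positions. -/
def KeyLt (T : PreTree V) (x y : V) : Prop :=
  pos T x < pos T y ∨ (anc T x = anc T y ∧ (depth T x < depth T y ∨
    (depth T x = depth T y ∧ lidx T x < lidx T y)))

theorem bfo_lt_iff_idx (T : PreTree V) (x y : V) :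
    bfo T x < bfo T y ↔ (bfoList T).idxOf x < (bfoList T).idxOf y := by
  unfold bfo
  omega

theorem bfo_lt_of_keyLt (hT : Good T) {x y : V} (h : KeyLt T x y) :
    bfo T x < bfo T y := by
  rw [bfo_lt_iff_idx, bfoList_eq]
  have hax := anc_mem_rootChildren hT x
  have hay := anc_mem_rootChildren hT y
  have hbx : x ∈ blk T (anc T x) :=
    (blk_mem hT (anc_parent_none hT x)).2 (topAnc_eq_anc hT x)
  have hby : y ∈ blk T (anc T y) :=
    (blk_mem hT (anc_parent_none hT y)).2 (topAnc_eq_anc hT y)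
  have hnd : ((T.children none).flatMap (blk T)).Nodup := by
    rw [← bfoList_eq]; exact bfoList_nodup hT
  rcases h with h | ⟨hanc, h⟩
  · exact idx_flatMap_of_blocks hnd (hT.2.1 none) hax hay hbx hby h
  · rw [hanc] at hbx
    refine idx_flatMap_same_block hnd hay hbx hby ?_
    -- compare within a block
    have hndblk : (blk T (anc T y)).Nodup := blk_nodup hT (anc_parent_none hT y)
    unfold blk at hndblk ⊢
    have hlx : x ∈ lvl T (anc T y) (depth T x - 1) := by
      rw [← hanc]; exact mem_lvl_self hT x
    have hly : y ∈ lvl T (anc T y) (depth T y - 1) := mem_lvl_self hT y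
    have hdx1 : depth T x - 1 ∈ List.range (Fintype.card V + 1) := by
      rw [List.mem_range]; have := depth_le_card hT x; omega
    have hdy1 : depth T y - 1 ∈ List.range (Fintype.card V + 1) := by
      rw [List.mem_range]; have := depth_le_card hT y; omega
    rcases h with h | ⟨hdepth, h⟩
    · refine idx_flatMap_of_blocks hndblk List.nodup_range hdx1 hdy1 hlx hly ?_
      have hpx := depth_pos hT x
      rw [List.mem_range] at hdx1 hdy1
      rw [idx_range hdx1, idx_range hdy1]
      omega
    · have hxd : x ∈ lvl T (anc T y) (depth T y - 1) := by rw [← hdepth]; exact hlx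
      refine idx_flatMap_same_block hndblk hdy1 hxd hly ?_
      unfold lidx at h
      rw [hanc, hdepth] at h
      exact h

theorem keyLt_total (hT : Good T) {x y : V} (hne : x ≠ y) :
    KeyLt T x y ∨ KeyLt T y x := by
  rcases Nat.lt_trichotomy (pos T x) (pos T y) with h | h | h
  · exact Or.inl (Or.inl h)
  · have hanc : anc T x = anc T y := by
      have := List.idxOf_inj (y := anc T y) (anc_mem_rootChildren hT x)
      exact this.1 h
    rcases Nat.lt_trichotomy (depth T x) (depth T y) with h2 | h2 | h2
    · exact Or.inl (Or.inr ⟨hanc, Or.inl h2⟩)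
    · rcases Nat.lt_trichotomy (lidx T x) (lidx T y) with h3 | h3 | h3
      · exact Or.inl (Or.inr ⟨hanc, Or.inr ⟨h2, h3⟩⟩)
      · exfalso
        have hlx := mem_lvl_self hT x
        have hly := mem_lvl_self hT y
        rw [hanc, h2] at hlx
        unfold lidx at h3
        rw [hanc, h2] at h3
        exact hne ((List.idxOf_inj hlx).1 h3)
      · exact Or.inr (Or.inr ⟨hanc.symm, Or.inr ⟨h2.symm, h3⟩⟩)
    · exact Or.inr (Or.inr ⟨hanc.symm, Or.inl h2⟩)
  · exact Or.inr (Or.inl h)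

theorem keyLt_of_bfo_lt (hT : Good T) {x y : V} (h : bfo T x < bfo T y) :
    KeyLt T x y := by
  have hne : x ≠ y := by rintro rfl; omega
  rcases keyLt_total hT hne with hk | hk
  · exact hk
  · exact absurd (bfo_lt_of_keyLt hT hk) (by omega)

theorem bfo_total (hT : Good T) {x y : V} (hne : x ≠ y) :
    bfo T x < bfo T y ∨ bfo T y < bfo T x := by
  rcases keyLt_total hT hne with hk | hk
  · exact Or.inl (bfo_lt_of_keyLt hT hk)
  · exact Or.inr (bfo_lt_of_keyLt hT hk)

/-- the prefix sum of subtree heights before the subtree of `c`. -/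
noncomputable def pref (T : PreTree V) (c : V) : ℕ :=
  (((T.children none).takeWhile fun x => decide (x ≠ c)).map (subtreeMaxDepth T)).sum

theorem depth'_eq (hT : Good T) (v : V) :
    depth' T v = pref T (anc T v) + depth T v := by
  unfold depth' pref
  rw [topAnc_eq_anc hT v]

theorem depth_le_subtreeMaxDepth (hT : Good T) (v : V) :
    depth T v ≤ subtreeMaxDepth T (anc T v) := by
  unfold subtreeMaxDepth
  have h := Finset.le_sup (f := fun u : V => if topAnc T u = some (anc T v) then depth T u else 0)
    (Finset.mem_univ v)
  simpa [topAnc_eq_anc hT v] using h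

theorem depth'_mono (hT : Good T) {x y : V} (h : bfo T x < bfo T y) :
    depth' T x ≤ depth' T y := by
  have hk := keyLt_of_bfo_lt hT h
  rw [depth'_eq hT, depth'_eq hT]
  rcases hk with hk | ⟨hanc, hk⟩
  · have h1 : pref T (anc T x) + subtreeMaxDepth T (anc T x) ≤ pref T (anc T y) :=
      takeWhile_sum_le (subtreeMaxDepth T) (T.children none) (anc T x) (anc T y)
        (anc_mem_rootChildren hT x) hk
    have h2 := depth_le_subtreeMaxDepth hT x
    have h3 := depth_pos hT y
    omega
  · rw [hanc]
    omega

theorem bfoOpt_some (T : PreTree V) (p : V) : bfoOpt T (some p) = bfo T p := rfl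

theorem depth'_parent (hT : Good T) {b p : V} (h : T.parent b = some p) :
    depth' T b = depth' T p + 1 := by
  rw [depth'_eq hT, depth'_eq hT]
  have h1 : anc T b = anc T p := by
    have := topAnc_parent hT h
    rw [topAnc_eq_anc hT b, topAnc_eq_anc hT p] at this
    exact Option.some_injective V this
  rw [h1, depth_parent_some hT h]
  omega

theorem vbfs_depth'_lt (hT : Good T) {e : V × V} (h : IsVBFS T e) :
    depth' T e.1 < depth' T e.2 := by
  obtain ⟨h1, h2, h3⟩ := h
  cases hp : T.parent e.2 with
  | none => exact absurd hp h2
  | some p =>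
    rw [hp, bfoOpt_some] at h3
    have := depth'_mono hT h3
    rw [depth'_parent hT hp]
    omega

end BFOStructure
section RestructureChains

set_option linter.unusedSectionVars false

variable {V : Type} [Fintype V] [DecidableEq V] {T : PreTree V} {u v : V}

/-- `w` is a descendant of `v` in `T` (including `v` itself). -/
def Desc (T : PreTree V) (v w : V) : Prop :=
  ∃ k : ℕ, (parentStep T)^[k] (some w) = some v

theorem desc_self (T : PreTree V) (v : V) : Desc T v v := ⟨0, rfl⟩

theorem desc_of_parent {T : PreTree V} {v b p : V} (hp : T.parent b = some p)
    (hd : Desc T v p) : Desc T v b := by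
  obtain ⟨k, hk⟩ := hd
  exact ⟨k + 1, by rw [Function.iterate_succ_apply, parentStep_some, hp, hk]⟩

theorem desc_parent {T : PreTree V} {v b p : V} (hp : T.parent b = some p)
    (hd : Desc T v b) (hne : b ≠ v) : Desc T v p := by
  obtain ⟨k, hk⟩ := hd
  cases k with
  | zero => exact absurd (Option.some_injective V hk) hne
  | succ m =>
    rw [Function.iterate_succ_apply, parentStep_some, hp] at hk
    exact ⟨m, hk⟩

theorem desc_anc (hT : Good T) {v w : V} (hd : Desc T v w) : anc T w = anc T v := by
  obtain ⟨k, hk⟩ := hd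
  have := desc_topAnc hT hk
  rw [topAnc_eq_anc hT w, topAnc_eq_anc hT v] at this
  exact Option.some_injective V this

theorem desc_depth_ge (hT : Good T) {v w : V} (hd : Desc T v w) :
    depth T v ≤ depth T w := by
  obtain ⟨k, hk⟩ := hd
  have := desc_depth hT hk
  omega

theorem bfo_le_of_desc (hT : Good T) {v w : V} (hd : Desc T v w) :
    bfo T v ≤ bfo T w := by
  obtain ⟨k, hk⟩ := hd
  cases k with
  | zero => rw [Option.some_injective V hk]
  | succ m =>
    have hdep := desc_depth hT hk
    have hanc := desc_anc hT ⟨m + 1, hk⟩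
    have : KeyLt T v w := Or.inr ⟨hanc.symm, Or.inl (by omega)⟩
    exact Nat.le_of_lt (bfo_lt_of_keyLt hT this)

theorem vbfs_ne {T : PreTree V} {e : V × V} (h : IsVBFS T e) : e.1 ≠ e.2 := by
  rintro heq
  have := h.1
  rw [heq] at this
  omega

theorem not_desc_u (hT : Good T) (hv : IsVBFS T (u, v)) : ¬ Desc T v u := by
  intro hd
  have h1 := bfo_le_of_desc hT hd
  have h2 : bfo T u < bfo T v := hv.1
  omega

theorem not_desc_parent_v (hT : Good T) {p : V} (hp : T.parent v = some p) :
    ¬ Desc T v p := by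
  intro hd
  have h1 := desc_depth_ge hT hd
  have h2 := depth_parent_some hT hp
  omega

theorem restructure_parent_eq (T : PreTree V) (u v : V) (w : V) :
    (restructure T u v).parent w = if w = v then some u else T.parent w := rfl

theorem chain_eq_of_not_desc (T : PreTree V) (u v : V) {w : V} (hw : ¬ Desc T v w) :
    ∀ k : ℕ, (parentStep (restructure T u v))^[k] (some w)
      = (parentStep T)^[k] (some w) := by
  intro k
  induction k with
  | zero => rfl
  | succ m ih =>
    rw [Function.iterate_succ_apply', Function.iterate_succ_apply', ih]
    cases hx : (parentStep T)^[m] (some w) with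
    | none => rfl
    | some x =>
      have hxv : x ≠ v := by
        rintro rfl
        exact hw ⟨m, hx⟩
      simp only [parentStep_some, restructure_parent_eq, if_neg hxv]

theorem depth_restructure_of_not_desc (T : PreTree V) (u v : V) {w : V}
    (hw : ¬ Desc T v w) : depth (restructure T u v) w = depth T w := by
  unfold depth
  congr 1
  ext k
  simp only [Set.mem_setOf_eq, chain_eq_of_not_desc T u v hw k]

theorem topAnc_restructure_of_not_desc (T : PreTree V) (u v : V) {w : V}
    (hw : ¬ Desc T v w) : topAnc (restructure T u v) w = topAnc T w := by
  unfold topAnc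
  rw [depth_restructure_of_not_desc T u v hw, chain_eq_of_not_desc T u v hw]

theorem anc_restructure_of_not_desc (T : PreTree V) (u v : V) {w : V}
    (hw : ¬ Desc T v w) : anc (restructure T u v) w = anc T w := by
  unfold anc
  rw [topAnc_restructure_of_not_desc T u v hw]

/-- the minimal number of steps from a descendant `w` up to `v`. -/
noncomputable def descSteps (T : PreTree V) (v w : V) (hd : Desc T v w) : ℕ :=
  @Nat.find _ (fun _ => Classical.propDecidable _) hd

theorem descSteps_spec (T : PreTree V) (v w : V) (hd : Desc T v w) :
    (parentStep T)^[descSteps T v w hd] (some w) = some v :=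
  @Nat.find_spec _ (fun _ => Classical.propDecidable _) hd

theorem descSteps_min (T : PreTree V) (v w : V) (hd : Desc T v w) {j : ℕ}
    (hj : j < descSteps T v w hd) : (parentStep T)^[j] (some w) ≠ some v :=
  @Nat.find_min _ (fun _ => Classical.propDecidable _) hd _ hj

theorem chain_eq_of_desc_le (hT : Good T) {w : V} (hd : Desc T v w) :
    ∀ j ≤ descSteps T v w hd, (parentStep (restructure T u v))^[j] (some w)
      = (parentStep T)^[j] (some w) := by
  intro j hj
  induction j with
  | zero => rfl
  | succ m ih =>
    have hm : m ≤ descSteps T v w hd := by omega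
    rw [Function.iterate_succ_apply', Function.iterate_succ_apply', ih hm]
    cases hx : (parentStep T)^[m] (some w) with
    | none =>
      exfalso
      have hnone := iter_none_mono hx hm
      rw [descSteps_spec T v w hd] at hnone
      simp at hnone
    | some x =>
      have hxv : x ≠ v := fun h => descSteps_min T v w hd (by omega) (h ▸ hx)
      simp only [parentStep_some, restructure_parent_eq, if_neg hxv]

theorem chain_desc_to_u (hT : Good T) (hv : IsVBFS T (u, v)) {w : V} (hd : Desc T v w) :
    ∀ m : ℕ, (parentStep (restructure T u v))^[descSteps T v w hd + 1 + m] (some w)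
      = (parentStep T)^[m] (some u) := by
  have h1 : (parentStep (restructure T u v))^[descSteps T v w hd] (some w) = some v := by
    rw [chain_eq_of_desc_le hT hd _ le_rfl, descSteps_spec]
  have h2 : (parentStep (restructure T u v))^[descSteps T v w hd + 1] (some w) = some u := by
    rw [Function.iterate_succ_apply', h1]
    simp [restructure_parent_eq]
  intro m
  have harith : descSteps T v w hd + 1 + m = m + (descSteps T v w hd + 1) := by omega
  rw [harith, Function.iterate_add_apply, h2, chain_eq_of_not_desc T u v (not_desc_u hT hv)]

theorem good_restructure (hT : Good T) (hv : IsVBFS T (u, v)) :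
    Good (restructure T u v) := by
  refine ⟨?_, ?_, ?_⟩
  · intro w
    by_cases hd : Desc T v w
    · refine ⟨descSteps T v w hd + 1 + depth T u, ?_⟩
      rw [chain_desc_to_u hT hv hd]
      exact iter_depth hT u
    · exact ⟨depth T w, by rw [chain_eq_of_not_desc T u v hd]; exact iter_depth hT w⟩
  · intro w
    show (if w = some u then (T.children (some u)).erase v ++ [v]
      else (T.children w).erase v).Nodup
    split
    · rw [List.nodup_append]
      refine ⟨(hT.2.1 (some u)).erase v, List.nodup_singleton v, ?_⟩
      intro x hx y hx' hxy
      rw [List.mem_singleton] at hx'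
      subst hx'
      subst hxy
      exact absurd hx (fun hm => ((hT.2.1 (some u)).mem_erase_iff.1 hm).1 rfl)
    · exact (hT.2.1 w).erase v
  · intro w x
    show x ∈ (if w = some u then (T.children (some u)).erase v ++ [v]
      else (T.children w).erase v) ↔ (restructure T u v).parent x = w
    rw [restructure_parent_eq]
    split
    · rename_i hw
      subst hw
      rw [List.mem_append, List.mem_singleton, (hT.2.1 (some u)).mem_erase_iff,
        mem_children_iff hT]
      by_cases hxv : x = v
      · subst hxv; simp
      · simp [hxv]
    · rename_i hw
      rw [(hT.2.1 w).mem_erase_iff, mem_children_iff hT]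
      by_cases hxv : x = v
      · subst hxv
        simp only [if_pos rfl]
        constructor
        · rintro ⟨h, _⟩; exact absurd rfl h
        · intro h; exact absurd h.symm hw
      · simp [hxv]

theorem isOST_restructure {E : Finset (V × V)} (hT : IsOST E T) (hv : IsVBFS T (u, v))
    (he : (u, v) ∈ E) : IsOST E (restructure T u v) := by
  have hg := good_restructure hT.good hv
  refine ⟨hg.1, ?_, hg.2.1, hg.2.2⟩
  intro x y hxy
  rw [restructure_parent_eq] at hxy
  by_cases h : x = v
  · subst h
    rw [if_pos rfl] at hxy
    rw [← Option.some_injective V hxy]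
    exact he
  · rw [if_neg h] at hxy
    exact hT.2.1 x y hxy

theorem depth_restructure_of_desc (hT : Good T) (hv : IsVBFS T (u, v)) {w : V}
    (hd : Desc T v w) :
    depth (restructure T u v) w = descSteps T v w hd + 1 + depth T u := by
  have hg := good_restructure hT hv
  have hub : (parentStep (restructure T u v))^[descSteps T v w hd + 1 + depth T u]
      (some w) = none := by
    rw [chain_desc_to_u hT hv hd]; exact iter_depth hT u
  have hle := (depth_le_iff hg w _).1 hub
  have hlb : ∀ j < descSteps T v w hd + 1 + depth T u,
      (parentStep (restructure T u v))^[j] (some w) ≠ none := by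
    intro j hj
    by_cases hjk : j ≤ descSteps T v w hd
    · rw [chain_eq_of_desc_le hT hd _ hjk]
      intro hn
      have := iter_none_mono hn hjk
      rw [descSteps_spec T v w hd] at this
      simp at this
    · have hj2 : j = descSteps T v w hd + 1 + (j - descSteps T v w hd - 1) := by omega
      rw [hj2, chain_desc_to_u hT hv hd]
      exact iter_ne_none hT (by omega)
  by_contra hne
  have hlt : depth (restructure T u v) w < descSteps T v w hd + 1 + depth T u := by omega
  exact hlb _ hlt (iter_depth hg w)

theorem depth_restructure_of_desc_ge (hT : Good T) (hv : IsVBFS T (u, v)) {w : V}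
    (hd : Desc T v w) : depth T u + 1 ≤ depth (restructure T u v) w := by
  rw [depth_restructure_of_desc hT hv hd]
  omega

theorem topAnc_restructure_of_desc (hT : Good T) (hv : IsVBFS T (u, v)) {w : V}
    (hd : Desc T v w) : topAnc (restructure T u v) w = topAnc T u := by
  have hg := good_restructure hT hv
  unfold topAnc
  rw [depth_restructure_of_desc hT hv hd]
  have hu := depth_pos hT u
  have harith : descSteps T v w hd + 1 + depth T u - 1
      = (depth T u - 1) + (descSteps T v w hd + 1) := by omega
  rw [harith, Function.iterate_add_apply]
  have h2 : (parentStep (restructure T u v))^[descSteps T v w hd + 1] (some w) = some u := by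
    have := chain_desc_to_u hT hv hd 0
    simpa using this
  rw [h2, chain_eq_of_not_desc T u v (not_desc_u hT hv)]

theorem anc_restructure_of_desc (hT : Good T) (hv : IsVBFS T (u, v)) {w : V}
    (hd : Desc T v w) : anc (restructure T u v) w = anc T u := by
  have hg := good_restructure hT hv
  have h1 := topAnc_restructure_of_desc hT hv hd
  rw [topAnc_eq_anc hg w, topAnc_eq_anc hT u] at h1
  exact Option.some_injective V h1

theorem rootChildren_restructure (hT : Good T) (hv : IsVBFS T (u, v)) :
    (restructure T u v).children none = T.children none := by
  show (if (none : Option V) = some u then (T.children (some u)).erase v ++ [v]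
    else (T.children none).erase v) = T.children none
  rw [if_neg (by simp)]
  refine List.erase_of_not_mem ?_
  intro hm
  exact hv.2.1 ((mem_children_iff hT).1 hm)

end RestructureChains
section MoreLists

variable {α : Type _}

theorem mem_takeWhile_idx [DecidableEq α] {l : List α} {c x : α}
    (h : x ∈ l.takeWhile (fun z => decide (z ≠ c))) : l.idxOf x < l.idxOf c := by
  induction l with
  | nil => simp at h
  | cons a t ih =>
    by_cases hac : a = c
    · subst hac
      rw [List.takeWhile_cons_of_neg (by simp)] at h
      simp at h
    · rw [List.takeWhile_cons_of_pos (by simpa using hac)] at h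
      rcases List.mem_cons.1 h with rfl | h
      · rw [List.idxOf_cons_self, idx_cons_ne t hac]
        omega
      · have := ih h
        have hax : a = x ∨ a ≠ x := em _
        rcases hax with rfl | hax
        · rw [List.idxOf_cons_self, idx_cons_ne t hac]; omega
        · rw [idx_cons_ne t hax, idx_cons_ne t hac]; omega

theorem idx_lt_mem_takeWhile [DecidableEq α] {l : List α} {c x : α}
    (hx : x ∈ l) (h : l.idxOf x < l.idxOf c) :
    x ∈ l.takeWhile (fun z => decide (z ≠ c)) := by
  induction l with
  | nil => simp at hx
  | cons a t ih =>
    have hac : a ≠ c := by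
      rintro rfl
      rw [List.idxOf_cons_self] at h
      omega
    rw [List.takeWhile_cons_of_pos (by simpa using hac)]
    by_cases hax : a = x
    · subst hax; exact List.mem_cons_self
    · have hx' : x ∈ t := mem_of_mem_cons_ne hx (fun hh => hax hh.symm)
      have h' : t.idxOf x < t.idxOf c := by
        rw [idx_cons_ne t hax, idx_cons_ne t hac] at h
        omega
      exact List.mem_cons_of_mem _ (ih hx' h')

theorem filter_erase_of_neg [DecidableEq α] {p : α → Bool} {v : α} (hv : p v = false) :
    ∀ l : List α, (l.erase v).filter p = l.filter p := by
  intro l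
  induction l with
  | nil => simp
  | cons a t ih =>
    by_cases hav : a = v
    · subst hav
      rw [List.erase_cons_head, List.filter_cons_of_neg (by simp [hv])]
    · rw [List.erase_cons_tail (by simpa using hav)]
      by_cases hpa : p a = true
      · rw [List.filter_cons_of_pos hpa, List.filter_cons_of_pos hpa, ih]
      · rw [List.filter_cons_of_neg (by simpa using hpa),
          List.filter_cons_of_neg (by simpa using hpa), ih]

theorem flatMap_filter_eq {β : Type _} (p : α → Bool) (g : α → List β) (l : List α)
    (h : ∀ x ∈ l, p x = false → g x = []) :
    l.flatMap g = (l.filter p).flatMap g := by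
  induction l with
  | nil => simp
  | cons a t ih =>
    rw [List.flatMap_cons]
    by_cases hpa : p a = true
    · rw [List.filter_cons_of_pos hpa, List.flatMap_cons,
        ih (fun x hx => h x (List.mem_cons_of_mem _ hx))]
    · rw [List.filter_cons_of_neg (by simpa using hpa),
        h a (List.mem_cons_self) (by simpa using hpa),
        ih (fun x hx => h x (List.mem_cons_of_mem _ hx))]
      rfl

theorem flatMap_congr {β : Type _} {f g : α → List β} {l : List α}
    (h : ∀ x ∈ l, f x = g x) : l.flatMap f = l.flatMap g := by
  induction l with
  | nil => rfl
  | cons a t ih =>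
    rw [List.flatMap_cons, List.flatMap_cons, h a (List.mem_cons_self),
      ih (fun x hx => h x (List.mem_cons_of_mem _ hx))]

end MoreLists

section RestructureDepth

set_option linter.unusedSectionVars false

variable {V : Type} [Fintype V] [DecidableEq V] {T : PreTree V} {u v : V}

theorem smd_eq_restructure (hT : Good T) (hv : IsVBFS T (u, v)) {c : V}
    (hcu : c ≠ anc T u) (hcv : c ≠ anc T v) :
    subtreeMaxDepth (restructure T u v) c = subtreeMaxDepth T c := by
  unfold subtreeMaxDepth
  refine Finset.sup_congr rfl ?_
  intro x _
  by_cases hd : Desc T v x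
  · rw [if_neg, if_neg]
    · rw [topAnc_eq_anc hT x, desc_anc hT hd]
      exact fun h => hcv (Option.some_injective V h).symm
    · rw [topAnc_restructure_of_desc hT hv hd, topAnc_eq_anc hT u]
      exact fun h => hcu (Option.some_injective V h).symm
  · rw [topAnc_restructure_of_not_desc T u v hd, depth_restructure_of_not_desc T u v hd]

theorem smd_ge_restructure (hT : Good T) (hv : IsVBFS T (u, v)) {c : V}
    (hcv : c ≠ anc T v) :
    subtreeMaxDepth T c ≤ subtreeMaxDepth (restructure T u v) c := by
  unfold subtreeMaxDepth
  refine Finset.sup_mono_fun ?_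
  intro x _
  by_cases hx : topAnc T x = some c
  · have hd : ¬ Desc T v x := by
      intro hd
      rw [topAnc_eq_anc hT x, desc_anc hT hd] at hx
      exact hcv (Option.some_injective V hx).symm
    have hx2 : topAnc (restructure T u v) x = some c := by
      rw [topAnc_restructure_of_not_desc T u v hd]; exact hx
    rw [if_pos hx, if_pos hx2, depth_restructure_of_not_desc T u v hd]
  · rw [if_neg hx]
    exact Nat.zero_le _

theorem smd_ancv_ge (hT : Good T) (hv : IsVBFS T (u, v)) :
    depth T v - 1 ≤ subtreeMaxDepth (restructure T u v) (anc T v) := by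
  cases hp : T.parent v with
  | none => exact absurd hp hv.2.1
  | some p =>
    have hnd := not_desc_parent_v hT hp
    have h1 : topAnc (restructure T u v) p = some (anc T v) := by
      rw [topAnc_restructure_of_not_desc T u v hnd, ← topAnc_parent hT hp,
        topAnc_eq_anc hT v]
    have h2 : depth (restructure T u v) p = depth T v - 1 := by
      rw [depth_restructure_of_not_desc T u v hnd]
      have := depth_parent_some hT hp
      omega
    unfold subtreeMaxDepth
    refine le_trans ?_ (Finset.le_sup (f := fun x : V =>
      if topAnc (restructure T u v) x = some (anc T v)
        then depth (restructure T u v) x else 0) (Finset.mem_univ p))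
    simp [h1, h2]

theorem pos_u_le_pos_v (hT : Good T) (hv : IsVBFS T (u, v)) :
    (T.children none).idxOf (anc T u) ≤ (T.children none).idxOf (anc T v) := by
  have hk := keyLt_of_bfo_lt hT hv.1
  rcases hk with h | ⟨h, _⟩
  · exact Nat.le_of_lt h
  · rw [h]

theorem pref_restructure_eq (hT : Good T) (hv : IsVBFS T (u, v)) (c : V)
    (hc : (T.children none).idxOf c ≤ (T.children none).idxOf (anc T u)) :
    pref (restructure T u v) c = pref T c := by
  unfold pref
  rw [rootChildren_restructure hT hv]
  congr 1
  refine List.map_congr_left ?_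
  intro x hx
  have hxidx := mem_takeWhile_idx hx
  have huv := pos_u_le_pos_v hT hv
  have hxu : x ≠ anc T u := by
    rintro rfl
    omega
  have hxv : x ≠ anc T v := by
    rintro rfl
    omega
  exact smd_eq_restructure hT hv hxu hxv

theorem pref_restructure_ge (hT : Good T) (hv : IsVBFS T (u, v)) (c : V)
    (hc : (T.children none).idxOf c ≤ (T.children none).idxOf (anc T v)) :
    pref T c ≤ pref (restructure T u v) c := by
  unfold pref
  rw [rootChildren_restructure hT hv]
  refine List.sum_le_sum ?_
  intro x hx
  have hxidx := mem_takeWhile_idx hx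
  have hxv : x ≠ anc T v := by
    rintro rfl
    omega
  exact smd_ge_restructure hT hv hxv

theorem pref_restructure_deep (hT : Good T) (hv : IsVBFS T (u, v)) (c : V)
    (hc : (T.children none).idxOf (anc T v) < (T.children none).idxOf c) :
    pref T (anc T v) + (depth T v - 1) ≤ pref (restructure T u v) c := by
  have h1 := takeWhile_sum_le (subtreeMaxDepth (restructure T u v)) (T.children none)
    (anc T v) c (anc_mem_rootChildren hT v) hc
  have h2 := pref_restructure_ge hT hv (anc T v) le_rfl
  have h3 := smd_ancv_ge hT hv
  unfold pref at *
  rw [rootChildren_restructure hT hv] at *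
  omega

theorem depth'_restructure_of_desc (hT : Good T) (hv : IsVBFS T (u, v)) {w : V}
    (hd : Desc T v w) :
    depth' T u + 1 ≤ depth' (restructure T u v) w := by
  have hg := good_restructure hT hv
  rw [depth'_eq hg w, anc_restructure_of_desc hT hv hd,
    pref_restructure_eq hT hv (anc T u) le_rfl]
  have h1 := depth_restructure_of_desc_ge hT hv hd
  rw [depth'_eq hT u]
  omega

theorem depth'_restructure_ge (hT : Good T) (hv : IsVBFS T (u, v)) (w : V) :
    min (depth' T w) (depth' T u + 1) ≤ depth' (restructure T u v) w := by
  by_cases hd : Desc T v w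
  · exact le_trans (min_le_right _ _) (depth'_restructure_of_desc hT hv hd)
  · have hg := good_restructure hT hv
    rw [depth'_eq hg w, anc_restructure_of_not_desc T u v hd,
      depth_restructure_of_not_desc T u v hd]
    rcases le_or_gt ((T.children none).idxOf (anc T w))
        ((T.children none).idxOf (anc T u)) with h1 | h1
    · rw [pref_restructure_eq hT hv _ h1, ← depth'_eq hT w]
      exact min_le_left _ _
    · rcases le_or_gt ((T.children none).idxOf (anc T w))
          ((T.children none).idxOf (anc T v)) with h2 | h2
      · have h3 := pref_restructure_ge hT hv _ h2
        have h4 := depth'_eq hT w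
        have h5 : min (depth' T w) (depth' T u + 1) ≤ depth' T w := min_le_left _ _
        omega
      · have h3 := pref_restructure_deep hT hv _ h2
        have h4 : depth' T u < depth' T v := vbfs_depth'_lt hT hv
        have h5 := depth'_eq hT v
        have h6 := depth_pos hT w
        have h7 := depth_pos hT v
        have h8 : min (depth' T w) (depth' T u + 1) ≤ depth' T u + 1 := min_le_right _ _
        omega

end RestructureDepth
section RestructureOrder

set_option linter.unusedSectionVars false

variable {V : Type} [Fintype V] [DecidableEq V] {T : PreTree V} {u v : V}

/-- Boolean predicate: `w` is not a descendant of `v`. -/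
noncomputable def pA (T : PreTree V) (v : V) : V → Bool :=
  fun w => @decide (¬ Desc T v w) (Classical.propDecidable _)

theorem pA_true {w : V} : pA T v w = true ↔ ¬ Desc T v w := by
  unfold pA
  exact @decide_eq_true_iff _ (Classical.propDecidable _)

theorem pA_false {w : V} : pA T v w = false ↔ Desc T v w := by
  unfold pA
  rw [@decide_eq_false_iff_not _ (Classical.propDecidable _), not_not]

theorem restructure_children (T : PreTree V) (u v : V) (w : Option V) :
    (restructure T u v).children w =
      if w = some u then (T.children (some u)).erase v ++ [v]
      else (T.children w).erase v := rfl

theorem lvl_filter_eq (hT : Good T) (hv : IsVBFS T (u, v)) (c : V) (k : ℕ) :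
    (lvl (restructure T u v) c k).filter (pA T v) = (lvl T c k).filter (pA T v) := by
  have hg := good_restructure hT hv
  have hpAv : pA T v v = false := pA_false.2 (desc_self T v)
  induction k with
  | zero => rfl
  | succ k ih =>
    have e1 : lvl (restructure T u v) c (k + 1)
        = expand (restructure T u v) (lvl (restructure T u v) c k) := by
      unfold lvl; rw [Function.iterate_succ_apply']
    have e2 : lvl T c (k + 1) = expand T (lvl T c k) := by
      unfold lvl; rw [Function.iterate_succ_apply']
    rw [e1, e2]
    unfold expand
    rw [List.filter_flatMap, List.filter_flatMap]
    rw [flatMap_filter_eq (pA T v) _ (lvl (restructure T u v) c k) ?h2,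
      flatMap_filter_eq (pA T v) _ (lvl T c k) ?hT']
    case h2 =>
      intro x _ hx
      rw [pA_false] at hx
      apply List.filter_eq_nil_iff.2
      intro y hy
      rw [Bool.not_eq_true, pA_false]
      have hpy := (mem_children_iff hg).1 hy
      rw [restructure_parent_eq] at hpy
      by_cases hyv : y = v
      · rw [hyv]; exact desc_self T v
      · rw [if_neg hyv] at hpy
        exact desc_of_parent hpy hx
    case hT' =>
      intro x _ hx
      rw [pA_false] at hx
      apply List.filter_eq_nil_iff.2
      intro y hy
      rw [Bool.not_eq_true, pA_false]
      exact desc_of_parent ((mem_children_iff hT).1 hy) hx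
    rw [ih]
    refine flatMap_congr ?_
    intro x hx
    rw [restructure_children]
    by_cases hxu : x = u
    · subst hxu
      rw [if_pos rfl, List.filter_append, filter_erase_of_neg hpAv]
      simp [hpAv]
    · rw [if_neg (by simpa using hxu)]
      exact filter_erase_of_neg hpAv _

theorem anc_ne_v (hT : Good T) (hv : IsVBFS T (u, v)) (x : V) : anc T x ≠ v := by
  intro h
  have := anc_parent_none hT x
  rw [h] at this
  exact hv.2.1 this

theorem parent_restructure_anc (hT : Good T) (hv : IsVBFS T (u, v)) (x : V) :
    (restructure T u v).parent (anc T x) = none := by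
  rw [restructure_parent_eq, if_neg (anc_ne_v hT hv x)]
  exact anc_parent_none hT x

theorem mem_lvl_restructure (hT : Good T) (hv : IsVBFS T (u, v)) {x : V}
    (hx : ¬ Desc T v x) :
    x ∈ lvl (restructure T u v) (anc T x) (depth T x - 1) := by
  have hg := good_restructure hT hv
  refine (lvl_mem hg (parent_restructure_anc hT hv x) _).2 ⟨?_, ?_⟩
  · rw [topAnc_restructure_of_not_desc T u v hx, topAnc_eq_anc hT x]
  · rw [depth_restructure_of_not_desc T u v hx]
    have := depth_pos hT x
    omega

theorem bfo_restructure_mono (hT : Good T) (hv : IsVBFS T (u, v)) {x y : V}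
    (hx : ¬ Desc T v x) (hy : ¬ Desc T v y) (h : bfo T x < bfo T y) :
    bfo (restructure T u v) x < bfo (restructure T u v) y := by
  have hg := good_restructure hT hv
  refine bfo_lt_of_keyLt hg ?_
  have hk := keyLt_of_bfo_lt hT h
  have hposx : pos (restructure T u v) x = pos T x := by
    unfold pos
    rw [rootChildren_restructure hT hv, anc_restructure_of_not_desc T u v hx]
  have hposy : pos (restructure T u v) y = pos T y := by
    unfold pos
    rw [rootChildren_restructure hT hv, anc_restructure_of_not_desc T u v hy]
  rcases hk with hk | ⟨hanc, hk⟩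
  · exact Or.inl (by rw [hposx, hposy]; exact hk)
  · refine Or.inr ⟨?_, ?_⟩
    · rw [anc_restructure_of_not_desc T u v hx, anc_restructure_of_not_desc T u v hy]
      exact hanc
    rcases hk with hk | ⟨hde, hl⟩
    · exact Or.inl (by
        rw [depth_restructure_of_not_desc T u v hx, depth_restructure_of_not_desc T u v hy]
        exact hk)
    · refine Or.inr ⟨?_, ?_⟩
      · rw [depth_restructure_of_not_desc T u v hx, depth_restructure_of_not_desc T u v hy]
        exact hde
      -- within-level comparison
      have hxy : x ≠ y := by
        rintro rfl
        omega
      have hmx : x ∈ lvl T (anc T x) (depth T x - 1) := mem_lvl_self hT x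
      have hmy : y ∈ lvl T (anc T x) (depth T x - 1) := by
        have := mem_lvl_self hT y
        rwa [← hanc, ← hde] at this
      have hidxT : (lvl T (anc T x) (depth T x - 1)).idxOf x
          < (lvl T (anc T x) (depth T x - 1)).idxOf y := by
        have h1 : lidx T x = (lvl T (anc T x) (depth T x - 1)).idxOf x := rfl
        have h2 : lidx T y = (lvl T (anc T x) (depth T x - 1)).idxOf y := by
          unfold lidx
          rw [← hanc, ← hde]
        rw [h1, h2] at hl
        exact hl
      have hpx : pA T v x = true := pA_true.2 hx
      have hpy : pA T v y = true := pA_true.2 hy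
      have hfil := (idx_filter_lt_iff (pA T v) (lvl T (anc T x) (depth T x - 1)) x y
        (lvl_nodup hT _ _) hmx hmy hxy hpx hpy).1 hidxT
      rw [← lvl_filter_eq hT hv (anc T x) (depth T x - 1)] at hfil
      have hmx2 : x ∈ lvl (restructure T u v) (anc T x) (depth T x - 1) :=
        mem_lvl_restructure hT hv hx
      have hmy2 : y ∈ lvl (restructure T u v) (anc T x) (depth T x - 1) := by
        have := mem_lvl_restructure hT hv hy
        rwa [← hanc, ← hde] at this
      have hidx2 := (idx_filter_lt_iff (pA T v) (lvl (restructure T u v) (anc T x)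
        (depth T x - 1)) x y (lvl_nodup hg _ _) hmx2 hmy2 hxy hpx hpy).2 hfil
      show lidx (restructure T u v) x < lidx (restructure T u v) y
      have e1 : lidx (restructure T u v) x
          = (lvl (restructure T u v) (anc T x) (depth T x - 1)).idxOf x := by
        unfold lidx
        rw [anc_restructure_of_not_desc T u v hx, depth_restructure_of_not_desc T u v hx]
      have e2 : lidx (restructure T u v) y
          = (lvl (restructure T u v) (anc T x) (depth T x - 1)).idxOf y := by
        unfold lidx
        rw [anc_restructure_of_not_desc T u v hy, depth_restructure_of_not_desc T u v hy,
          ← hanc, ← hde]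
      rw [e1, e2]
      exact hidx2

theorem newly_vbfs (hT : Good T) (hv : IsVBFS T (u, v)) {a b : V} (hab : a ≠ b)
    (h2 : IsVBFS (restructure T u v) (a, b)) :
    IsVBFS T (a, b) ∨ depth' T u + 1 ≤ depth' (restructure T u v) a := by
  have hg := good_restructure hT hv
  by_cases hDa : Desc T v a
  · exact Or.inr (depth'_restructure_of_desc hT hv hDa)
  by_cases hbv : b = v
  · have hpv : (restructure T u v).parent b = some u := by
      rw [restructure_parent_eq, if_pos hbv]
    have h3 : bfo (restructure T u v) a < bfo (restructure T u v) u := by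
      have h4 : bfo (restructure T u v) a < bfoOpt (restructure T u v)
          ((restructure T u v).parent b) := h2.2.2
      rw [hpv, bfoOpt_some] at h4
      exact h4
    have hau : a ≠ u := by rintro rfl; omega
    have h4 : bfo T a < bfo T u := by
      rcases bfo_total hT hau with h | h
      · exact h
      · exact absurd (bfo_restructure_mono hT hv (not_desc_u hT hv) hDa h) (by omega)
    refine Or.inl ⟨?_, ?_, ?_⟩
    · show bfo T a < bfo T b
      rw [hbv]
      exact lt_trans h4 hv.1
    · show T.parent b ≠ none
      rw [hbv]
      exact hv.2.1
    · show bfo T a < bfoOpt T (T.parent b)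
      rw [hbv]
      exact lt_trans h4 hv.2.2
  · have hpb2 : (restructure T u v).parent b = T.parent b := by
      rw [restructure_parent_eq, if_neg hbv]
    cases hpb : T.parent b with
    | none => exact absurd (by rw [hpb2, hpb] : (restructure T u v).parent b = none) h2.2.1
    | some p =>
      have h3 : bfo (restructure T u v) a < bfo (restructure T u v) p := by
        have h4 := h2.2.2
        rw [hpb2, hpb, bfoOpt_some] at h4
        exact h4
      have hap : a ≠ p := by rintro rfl; omega
      by_cases hDb : Desc T v b
      · by_cases hVB : IsVBFS T (a, b)
        · exact Or.inl hVB
        right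
        have hbig : ∃ x, Desc T v x ∧ x ≠ a ∧ ¬ (bfo T a < bfo T x) := by
          by_cases h5 : bfo T a < bfo T b
          · by_cases h6 : bfo T a < bfo T p
            · exact absurd ⟨h5, by rw [hpb]; simp, by rw [hpb, bfoOpt_some]; exact h6⟩ hVB
            · exact ⟨p, desc_parent hpb hDb hbv, fun h => hap h.symm, h6⟩
          · exact ⟨b, hDb, fun h => hab h.symm, h5⟩
        obtain ⟨x, hxd, hxa, hxbfo⟩ := hbig
        have hxlt : bfo T x < bfo T a := by
          rcases bfo_total hT (fun h => hxa h.symm) with h | h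
          · exact absurd h hxbfo
          · exact h
        have hvx : bfo T v ≤ bfo T x := bfo_le_of_desc hT hxd
        have hmono : depth' T v ≤ depth' T a := depth'_mono hT (by omega)
        have hvd : depth' T u < depth' T v := vbfs_depth'_lt hT hv
        have hmin := depth'_restructure_ge hT hv a
        omega
      · have hDp : ¬ Desc T v p := fun h => hDb (desc_of_parent hpb h)
        have h5 : bfo T a < bfo T b := by
          rcases bfo_total hT hab with h | h
          · exact h
          · exact absurd (bfo_restructure_mono hT hv hDb hDa h)
              (by have h6 : bfo (restructure T u v) a < bfo (restructure T u v) b := h2.1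
                  omega)
        have h6 : bfo T a < bfo T p := by
          rcases bfo_total hT hap with h | h
          · exact h
          · exact absurd (bfo_restructure_mono hT hv hDp hDa h) (by omega)
        exact Or.inl ⟨h5, by rw [hpb]; simp, by rw [hpb, bfoOpt_some]; exact h6⟩

end RestructureOrder
section Glue

set_option linter.unusedSectionVars false

variable {V : Type} [Fintype V] [DecidableEq V]

/-- invariant: during pass `j` with scanned set `S`, every V-BFS edge has
`depth'` of its source at least `j - 1`, and at least `j` if already scanned. -/
def Inv_s11 (E : Finset (V × V)) (j : ℕ) (S : Set (V × V)) (T : PreTree V) : Prop :=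
  IsOST E T ∧ ∀ f ∈ E, IsVBFS T f →
    j ≤ depth' T f.1 + 1 ∧ (f ∈ S → j ≤ depth' T f.1)

theorem inv_congr {E : Finset (V × V)} {j : ℕ} {S S' : Set (V × V)} {T : PreTree V}
    (hss : ∀ f, f ∈ S' → f ∈ S) (h : Inv_s11 E j S T) : Inv_s11 E j S' T :=
  ⟨h.1, fun f hf h2 => ⟨(h.2 f hf h2).1, fun hm => (h.2 f hf h2).2 (hss f hm)⟩⟩

theorem inv_step {E : Finset (V × V)} (hE : ∀ e ∈ E, e.1 ≠ e.2) {j : ℕ}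
    {S : Set (V × V)} {T : PreTree V} (h : Inv_s11 E j S T) {e : V × V} (he : e ∈ E) :
    Inv_s11 E j (insert e S) (if IsVBFS T e then restructure T e.1 e.2 else T) := by
  by_cases hvb : IsVBFS T e
  · rw [if_pos hvb]
    obtain ⟨u, v⟩ := e
    have hv : IsVBFS T (u, v) := hvb
    have hOST := h.1
    have hg := hOST.good
    refine ⟨isOST_restructure hOST hv he, ?_⟩
    rintro ⟨a, b⟩ hf h2
    have hab : a ≠ b := hE _ hf
    by_cases hfe : (a, b) = (u, v)
    · exfalso
      rw [hfe] at h2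
      have hpv : (restructure T u v).parent v = some u := by
        rw [restructure_parent_eq, if_pos rfl]
      have h3 : bfo (restructure T u v) u < bfoOpt (restructure T u v)
          ((restructure T u v).parent v) := h2.2.2
      rw [hpv, bfoOpt_some] at h3
      omega
    · have hinv_uv : j ≤ depth' T u + 1 := (h.2 (u, v) he hv).1
      rcases newly_vbfs hg hv hab h2 with hVB | hdeep
      · have hinv_f := h.2 (a, b) hf hVB
        have hmin := depth'_restructure_ge hg hv a
        have hf1 : j ≤ depth' T a + 1 := hinv_f.1
        constructor
        · simp only [Prod.fst]
          omega
        · intro hmem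
          have hS : (a, b) ∈ S := by
            rcases Set.mem_insert_iff.1 hmem with heq | hS
            · exact absurd heq hfe
            · exact hS
          have hf2 : j ≤ depth' T a := hinv_f.2 hS
          simp only [Prod.fst]
          omega
      · constructor
        · simp only [Prod.fst]; omega
        · intro _; simp only [Prod.fst]; omega
  · rw [if_neg hvb]
    refine ⟨h.1, ?_⟩
    intro f hf h2
    refine ⟨(h.2 f hf h2).1, ?_⟩
    intro hmem
    rcases Set.mem_insert_iff.1 hmem with rfl | hS
    · exact absurd h2 hvb
    · exact (h.2 f hf h2).2 hS

theorem inv_scan {E : Finset (V × V)} (hE : ∀ e ∈ E, e.1 ≠ e.2) {j : ℕ} :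
    ∀ (L : List (V × V)) {S : Set (V × V)} {T : PreTree V}, Inv_s11 E j S T →
      (∀ e ∈ L, e ∈ E) → Inv_s11 E j (S ∪ {x | x ∈ L}) (EEscan L T) := by
  intro L
  induction L with
  | nil =>
    intro S T h _
    exact inv_congr (fun f hm => by
      rcases hm with hm | hm
      · exact hm
      · simp at hm) h
  | cons e L ih =>
    intro S T h hsub
    have hstep := inv_step hE h (hsub e (List.mem_cons_self))
    have hscan := ih hstep (fun f hf => hsub f (List.mem_cons_of_mem _ hf))
    have heq : EEscan (e :: L) T
        = EEscan L (if IsVBFS T e then restructure T e.1 e.2 else T) := by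
      unfold EEscan
      rw [List.foldl_cons]
    rw [heq]
    refine inv_congr ?_ hscan
    intro f hm
    rcases hm with hm | hm
    · exact Or.inl (Set.mem_insert_iff.2 (Or.inr hm))
    · simp only [Set.mem_setOf_eq] at hm
      rcases List.mem_cons.1 hm with rfl | hm
      · exact Or.inl (Set.mem_insert_iff.2 (Or.inl rfl))
      · exact Or.inr hm

theorem inv_pass {E : Finset (V × V)} {j : ℕ} {S : Set (V × V)} {T : PreTree V}
    (h : Inv_s11 E j S T) (hsup : ∀ f ∈ E, f ∈ S) : Inv_s11 E (j + 1) ∅ T := by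
  refine ⟨h.1, ?_⟩
  intro f hf h2
  have := (h.2 f hf h2).2 (hsup f hf)
  exact ⟨by omega, fun hm => absurd hm (Set.notMem_empty f)⟩

theorem inv_init {E : Finset (V × V)} {T0 : PreTree V} (hT0 : IsInitTree T0) :
    Inv_s11 E 1 ∅ T0 := by
  refine ⟨⟨?_, ?_, ?_, ?_⟩, ?_⟩
  · intro v
    exact ⟨1, by simp [hT0.1 v]⟩
  · intro v u hvu
    rw [hT0.1 v] at hvu
    simp at hvu
  · intro w
    cases w with
    | none => exact hT0.2.1
    | some x => rw [hT0.2.2.2 x]; exact List.nodup_nil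
  · intro w x
    cases w with
    | none => exact iff_of_true (hT0.2.2.1 x) (hT0.1 x)
    | some y =>
      rw [hT0.2.2.2 y]
      constructor
      · intro hm; simp at hm
      · intro hm
        rw [hT0.1 x] at hm
        simp at hm
  · intro f _ _
    exact ⟨by omega, fun hm => absurd hm (Set.notMem_empty f)⟩

theorem inv_iterate {E : Finset (V × V)} (hE : ∀ e ∈ E, e.1 ≠ e.2)
    {EL : List (V × V)} (hEL : IsEnum E EL) {T0 : PreTree V} (hT0 : IsInitTree T0) :
    ∀ m : ℕ, Inv_s11 E (m + 1) ∅ ((EEstep EL)^[m] T0) := by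
  intro m
  induction m with
  | zero => simpa using inv_init hT0
  | succ m ih =>
    rw [Function.iterate_succ_apply']
    have hscan := inv_scan hE EL ih (fun e he => (hEL.2 e).1 he)
    have hpass := inv_pass hscan (fun f hf => Or.inr ((hEL.2 f).2 hf))
    exact hpass

end Glue

theorem stmt11 {V : Type} [Fintype V] [DecidableEq V]
    (hV : 1 ≤ Fintype.card V) (E : Finset (V × V))
    (hE : ∀ e ∈ E, e.1 ≠ e.2)
    (EL : List (V × V)) (hEL : IsEnum E EL)
    (T0 : PreTree V) (hT0 : IsInitTree T0) :
    ∀ i j : ℕ, 1 ≤ i → i < j → ∀ p ≤ EL.length,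
      ∀ e ∈ E,
        depth' (EEscan (EL.take p) ((EEstep EL)^[j - 1] T0)) e.1 ≤ i →
        depth' (EEscan (EL.take p) ((EEstep EL)^[j - 1] T0)) e.2 ≤ i →
        ¬ IsVBFS (EEscan (EL.take p) ((EEstep EL)^[j - 1] T0)) e := by
  intro i j h1i hij p _ e he hd1 hd2 hVB
  have hbase := inv_iterate hE hEL hT0 (j - 1)
  have hj1 : j - 1 + 1 = j := by omega
  rw [hj1] at hbase
  have hscan := inv_scan hE (EL.take p) hbase
    (fun f hf => (hEL.2 f).1 (List.take_subset p EL hf))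
  have hinv := inv_congr (S := ∅ ∪ {x | x ∈ EL.take p}) (fun f hm => Or.inr hm) hscan
  have h2 := (hinv.2 e he hVB).1
  have h3 := vbfs_depth'_lt hinv.1.good hVB
  omega

end BFSFormal
end
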